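/- arXiv:1708.07187 — 9 statements merged into one kernel-verified Lean document; each statement's English description precedes it below -/
import Mathlib

section
/- Let O ⊂ (0,∞)², O3 ⊂ (0,∞), h : O3 → (0,∞), and suppose G(s,y) := (y + h(y)/s, y·s + h(y)) is a bijection between Q(O) × O3 and O, where Q(O) = {y/x : (x,y) ∈ O}. Then there exists a unique polymer involution T adapted to h on O × O3 (i.e. a map T : O × O3 → O × O3 with T∘T = id whose first two coordinates are T1(r1,r2,y) = y + h(y)·r1/r2 and T2(r1,r2,y) = y·r2/r1 + h(y)), and moreover T = (G⊗id)∘ψ23∘(G⊗id)⁻¹, where ψ23(a,b,c) = (a,c,b). -/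
/-- A polymer involution adapted to `h` on `D`: an involution of `D` whose first
two coordinates are `(r1,r2,y) ↦ (y + h(y)·r1/r2, y·r2/r1 + h(y))`. -/
def IsPolymerInvolution (h : ℝ → ℝ) (D : Set (ℝ × ℝ × ℝ)) (T : ℝ × ℝ × ℝ → ℝ × ℝ × ℝ) : Prop :=
  Set.MapsTo T D D ∧
  (∀ p ∈ D, T (T p) = p) ∧
  (∀ p ∈ D, (T p).1 = p.2.2 + h p.2.2 * p.1 / p.2.1) ∧
  (∀ p ∈ D, (T p).2.1 = p.2.2 * p.2.1 / p.1 + h p.2.2)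

/-- if `G(s,y) = (y + h(y)/s, y·s + h(y))` is a bijection from
`Q(O) × O3` onto `O`, then there is a unique polymer involution `T` adapted to `h`
on `O × O3`, and it satisfies `T = (G⊗id) ∘ ψ23 ∘ (G⊗id)⁻¹`, i.e.
`T (G(s,y), c) = (G(s,c), y)`. -/
theorem stmt_1
    (O : Set (ℝ × ℝ)) (hO : O ⊆ Set.Ioi (0 : ℝ) ×ˢ Set.Ioi (0 : ℝ))
    (O3 : Set ℝ) (hO3 : O3 ⊆ Set.Ioi (0 : ℝ))
    (h : ℝ → ℝ) (hh : ∀ y ∈ O3, 0 < h y)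
    (QO : Set ℝ) (hQO : QO = {s : ℝ | ∃ p ∈ O, s = p.2 / p.1})
    (G : ℝ × ℝ → ℝ × ℝ)
    (hG : ∀ s y : ℝ, G (s, y) = (y + h y / s, y * s + h y))
    (hbij : Set.BijOn G (QO ×ˢ O3) O) :
    ∃ T : ℝ × ℝ × ℝ → ℝ × ℝ × ℝ,
      IsPolymerInvolution h {p : ℝ × ℝ × ℝ | (p.1, p.2.1) ∈ O ∧ p.2.2 ∈ O3} T ∧
      (∀ T' : ℝ × ℝ × ℝ → ℝ × ℝ × ℝ,
        IsPolymerInvolution h {p : ℝ × ℝ × ℝ | (p.1, p.2.1) ∈ O ∧ p.2.2 ∈ O3} T' →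
        Set.EqOn T' T {p : ℝ × ℝ × ℝ | (p.1, p.2.1) ∈ O ∧ p.2.2 ∈ O3}) ∧
      (∀ s ∈ QO, ∀ y ∈ O3, ∀ c ∈ O3,
        T ((G (s, y)).1, (G (s, y)).2, c) = ((G (s, c)).1, (G (s, c)).2, y)) := by
  classical
  set g : ℝ × ℝ → ℝ × ℝ := Function.invFunOn G (QO ×ˢ O3) with hgdef
  have hinv : Set.InvOn g G (QO ×ˢ O3) O := hbij.invOn_invFunOn
  have hgmaps : Set.MapsTo g O (QO ×ˢ O3) := hbij.surjOn.mapsTo_invFunOn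
  have hQpos : ∀ s ∈ QO, 0 < s := by
    intro s hs
    rw [hQO] at hs
    obtain ⟨q, hq, rfl⟩ := hs
    have hq' := hO hq
    exact div_pos hq'.2 hq'.1
  have hOpos : ∀ r ∈ O, 0 < r.1 ∧ 0 < r.2 := fun r hr => hO hr
  -- generic arithmetic lemmas
  have key1 : ∀ bb q1 q21 ss : ℝ, 0 < ss → q1 ≠ 0 → q21 = ss * q1 →
      bb + h bb * q1 / q21 = bb + h bb / ss := by
    intro bb q1 q21 ss hss hq1 hq21
    subst hq21
    field_simp
  have key2 : ∀ bb q1 q21 ss : ℝ, 0 < ss → q1 ≠ 0 → q21 = ss * q1 →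
      bb * q21 / q1 + h bb = bb * ss + h bb := by
    intro bb q1 q21 ss hss hq1 hq21
    subst hq21
    field_simp
  -- ratio property of G
  have hGratio : ∀ s ∈ QO, ∀ y ∈ O3, (G (s, y)).2 = s * (G (s, y)).1 := by
    intro s hs y hy
    have hspos := hQpos s hs
    rw [hG]
    simp only
    field_simp
  -- first coordinate of g
  have hgr : ∀ r ∈ O, (g r).1 = r.2 / r.1 := by
    intro r hr
    have hmem := hgmaps hr
    have hGgr : G (g r) = r := hinv.2 hr
    have hs : (g r).1 ∈ QO := hmem.1
    have hy : (g r).2 ∈ O3 := hmem.2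
    have hratio := hGratio _ hs _ hy
    rw [show ((g r).1, (g r).2) = g r from rfl, hGgr] at hratio
    have hr1 := (hOpos r hr).1
    rw [hratio]
    field_simp
  set T : ℝ × ℝ × ℝ → ℝ × ℝ × ℝ := fun p =>
    (p.2.2 + h p.2.2 * p.1 / p.2.1,
      p.2.2 * p.2.1 / p.1 + h p.2.2, (g (p.1, p.2.1)).2) with hTdef
  set D : Set (ℝ × ℝ × ℝ) := {p : ℝ × ℝ × ℝ | (p.1, p.2.1) ∈ O ∧ p.2.2 ∈ O3} with hDdef
  have hsQ : ∀ p ∈ D, p.2.1 / p.1 ∈ QO := by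
    intro p hp
    rw [hQO]
    exact ⟨(p.1, p.2.1), hp.1, rfl⟩
  have hT12 : ∀ p ∈ D, ((T p).1, (T p).2.1) = G (p.2.1 / p.1, p.2.2) := by
    intro p hp
    have h1 := (hOpos _ hp.1).1
    have h2 := (hOpos _ hp.1).2
    rw [hG]
    simp only [hTdef, Prod.mk.injEq]
    refine ⟨?_, ?_⟩
    · rw [div_div_eq_mul_div]
    · rw [mul_div_assoc]
  have hTmem : ∀ p ∈ D, T p ∈ D := by
    intro p hp
    constructor
    · rw [show ((T p).1, (T p).2.1) = G (p.2.1 / p.1, p.2.2) from hT12 p hp]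
      exact hbij.mapsTo ⟨hsQ p hp, hp.2⟩
    · exact (hgmaps hp.1).2
  have hgp : ∀ p ∈ D, g (p.1, p.2.1) = (p.2.1 / p.1, (g (p.1, p.2.1)).2) := by
    intro p hp
    exact Prod.ext (hgr _ hp.1) rfl
  have hGgp : ∀ p ∈ D, G (p.2.1 / p.1, (g (p.1, p.2.1)).2) = (p.1, p.2.1) := by
    intro p hp
    rw [← hgp p hp]
    exact hinv.2 hp.1
  have hTinv : ∀ p ∈ D, T (T p) = p := by
    intro p hp
    have hq : T p ∈ D := hTmem p hp
    have hqO : ((T p).1, (T p).2.1) ∈ O := hq.1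
    have hq1 : 0 < (T p).1 := (hOpos _ hqO).1
    have hspos := hQpos _ (hsQ p hp)
    have hqr : (T p).2.1 = (p.2.1 / p.1) * (T p).1 := by
      have := hGratio _ (hsQ p hp) _ hp.2
      rw [← hT12 p hp] at this
      exact this
    have hg3 : g ((T p).1, (T p).2.1) = (p.2.1 / p.1, p.2.2) := by
      rw [hT12 p hp]
      exact hinv.1 ⟨hsQ p hp, hp.2⟩
    have hGb := hGgp p hp
    rw [hG] at hGb
    have hp1 : (g (p.1, p.2.1)).2 + h (g (p.1, p.2.1)).2 / (p.2.1 / p.1) = p.1 :=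
      congrArg Prod.fst hGb
    have hp2 : (g (p.1, p.2.1)).2 * (p.2.1 / p.1) + h (g (p.1, p.2.1)).2 = p.2.1 :=
      congrArg Prod.snd hGb
    refine Prod.ext ?_ (Prod.ext ?_ ?_)
    · show (T p).2.2 + h (T p).2.2 * (T p).1 / (T p).2.1 = p.1
      have h3 : (T p).2.2 = (g (p.1, p.2.1)).2 := rfl
      rw [h3, key1 _ _ _ _ hspos hq1.ne' hqr]
      exact hp1
    · show (T p).2.2 * (T p).2.1 / (T p).1 + h (T p).2.2 = p.2.1
      have h3 : (T p).2.2 = (g (p.1, p.2.1)).2 := rfl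
      rw [h3, key2 _ _ _ _ hspos hq1.ne' hqr]
      exact hp2
    · show (g ((T p).1, (T p).2.1)).2 = p.2.2
      rw [hg3]
  have hTformula1 : ∀ p ∈ D, (T p).1 = p.2.2 + h p.2.2 * p.1 / p.2.1 := fun p _ => rfl
  have hTformula2 : ∀ p ∈ D, (T p).2.1 = p.2.2 * p.2.1 / p.1 + h p.2.2 := fun p _ => rfl
  refine ⟨T, ⟨hTmem, hTinv, hTformula1, hTformula2⟩, ?_, ?_⟩
  · -- uniqueness
    rintro T' ⟨hT'maps, hT'inv, hT'1, hT'2⟩ p hp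
    have hq' : T' p ∈ D := hT'maps hp
    have hq12 : ((T' p).1, (T' p).2.1) = ((T p).1, (T p).2.1) := by
      rw [hT'1 p hp, hT'2 p hp, hTformula1 p hp, hTformula2 p hp]
    have hq12G : ((T' p).1, (T' p).2.1) = G (p.2.1 / p.1, p.2.2) := by
      rw [hq12]; exact hT12 p hp
    have hspos := hQpos _ (hsQ p hp)
    have hq1 : 0 < (T' p).1 := (hOpos _ hq'.1).1
    have hqr : (T' p).2.1 = (p.2.1 / p.1) * (T' p).1 := by
      have := hGratio _ (hsQ p hp) _ hp.2
      rw [← hq12G] at this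
      exact this
    have hb'O3 : (T' p).2.2 ∈ O3 := hq'.2
    have hA : p.1 = (T' p).2.2 + h (T' p).2.2 * (T' p).1 / (T' p).2.1 := by
      have := hT'1 (T' p) hq'
      rw [hT'inv p hp] at this
      exact this
    have hB : p.2.1 = (T' p).2.2 * (T' p).2.1 / (T' p).1 + h (T' p).2.2 := by
      have := hT'2 (T' p) hq'
      rw [hT'inv p hp] at this
      exact this
    have hGb' : G (p.2.1 / p.1, (T' p).2.2) = (p.1, p.2.1) := by
      rw [hG, Prod.mk.injEq]
      refine ⟨?_, ?_⟩
      · exact (hA.trans (key1 _ _ _ _ hspos hq1.ne' hqr)).symm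
      · exact (hB.trans (key2 _ _ _ _ hspos hq1.ne' hqr)).symm
    have hGb : G (p.2.1 / p.1, (g (p.1, p.2.1)).2) = (p.1, p.2.1) := hGgp p hp
    have hinj := hbij.injOn
      (show ((p.2.1 / p.1 : ℝ), (T' p).2.2) ∈ QO ×ˢ O3 from ⟨hsQ p hp, hb'O3⟩)
      (show ((p.2.1 / p.1 : ℝ), (g (p.1, p.2.1)).2) ∈ QO ×ˢ O3 from
        ⟨hsQ p hp, (hgmaps hp.1).2⟩)
      (hGb'.trans hGb.symm)
    have hb'eq : (T' p).2.2 = (g (p.1, p.2.1)).2 := ((Prod.mk.injEq _ _ _ _).mp hinj).2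
    have h12 := hq12
    rw [Prod.mk.injEq] at h12
    exact Prod.ext h12.1 (Prod.ext h12.2 hb'eq)
  · -- formula
    intro s hs y hy c hc
    have hGO : G (s, y) ∈ O := hbij.mapsTo ⟨hs, hy⟩
    set p : ℝ × ℝ × ℝ := ((G (s, y)).1, (G (s, y)).2, c) with hpdef
    have hpD : p ∈ D := ⟨hGO, hc⟩
    have hs' : p.2.1 / p.1 = s := by
      have hr := hGratio s hs y hy
      have h1 := (hOpos _ hGO).1
      simp only [hpdef]
      rw [hr]
      field_simp
    have hq12G : ((T p).1, (T p).2.1) = G (s, c) := by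
      rw [hT12 p hpD, hs']
    have hg3 : (g (p.1, p.2.1)).2 = y := by
      have he : (p.1, p.2.1) = G (s, y) := rfl
      rw [he]
      have := hinv.1 (⟨hs, hy⟩ : (s, y) ∈ QO ×ˢ O3)
      rw [this]
    have h12 := hq12G
    rw [Prod.mk.injEq] at h12
    exact Prod.ext h12.1 (Prod.ext h12.2 hg3)
end

section
/- Let O ⊂ (0,∞)², O3 ⊂ (0,∞), h : O3 → (0,∞). Suppose (T1,T2)(O × O3) = O where T1(r1,r2,y) = y + h(y)·r1/r2 and T2(r1,r2,y) = y·r2/r1 + h(y), and suppose for every (r1,r2) ∈ O the function y ↦ y·r2/r1 + h(y) is injective on O3. Then G(s,y) := (y + h(y)/s, y·s + h(y)) is a bijection between Q(O) × O3 and O. -/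
/-- if `(T1,T2)` maps `O × O3` onto `O` and for each `(r1,r2) ∈ O`
the map `y ↦ y·r2/r1 + h(y)` is injective on `O3`, then
`G(s,y) = (y + h(y)/s, y·s + h(y))` is a bijection from `Q(O) × O3` onto `O`. -/
theorem stmt_2
    (O : Set (ℝ × ℝ)) (hO : O ⊆ Set.Ioi (0 : ℝ) ×ˢ Set.Ioi (0 : ℝ))
    (O3 : Set ℝ) (hO3 : O3 ⊆ Set.Ioi (0 : ℝ))
    (h : ℝ → ℝ) (hh : ∀ y ∈ O3, 0 < h y)
    (hsurj : (fun p : ℝ × ℝ × ℝ => (p.2.2 + h p.2.2 * p.1 / p.2.1,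
        p.2.2 * p.2.1 / p.1 + h p.2.2)) ''
        {p : ℝ × ℝ × ℝ | (p.1, p.2.1) ∈ O ∧ p.2.2 ∈ O3} = O)
    (hinj : ∀ p ∈ O, Set.InjOn (fun y => y * p.2 / p.1 + h y) O3) :
    Set.BijOn (fun q : ℝ × ℝ => (q.2 + h q.2 / q.1, q.2 * q.1 + h q.2))
      ({s : ℝ | ∃ p ∈ O, s = p.2 / p.1} ×ˢ O3) O := by
  -- G(r2/r1, y) = T(r1, r2, y)
  have key : ∀ r1 r2 y : ℝ, (r1, r2) ∈ O →
      (y + h y / (r2 / r1), y * (r2 / r1) + h y)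
        = (y + h y * r1 / r2, y * r2 / r1 + h y) := by
    intro r1 r2 y hr
    have h1 : (0:ℝ) < r1 := (hO hr).1
    have h2 : (0:ℝ) < r2 := (hO hr).2
    have e1 : h y / (r2 / r1) = h y * r1 / r2 := by
      field_simp
    have e2 : y * (r2 / r1) = y * r2 / r1 := by ring
    rw [e1, e2]
  constructor
  · -- MapsTo
    rintro ⟨s, y⟩ ⟨⟨p, hp, hs⟩, hy⟩
    have hs2 : s = p.2 / p.1 := hs
    simp only
    rw [hs2, key p.1 p.2 y (by simpa using hp)]
    rw [← hsurj]
    exact ⟨(p.1, p.2, y), ⟨by simpa using hp, hy⟩, rfl⟩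
  constructor
  · -- InjOn
    rintro ⟨s, y⟩ ⟨⟨p, hp, hs⟩, hy⟩ ⟨s', y'⟩ ⟨⟨p', hp', hs'⟩, hy'⟩ heq
    have hs2 : s = p.2 / p.1 := hs
    have hs2' : s' = p'.2 / p'.1 := hs'
    have h1 : (0:ℝ) < p.1 := (hO hp).1
    have h2 : (0:ℝ) < p.2 := (hO hp).2
    have h1' : (0:ℝ) < p'.1 := (hO hp').1
    have h2' : (0:ℝ) < p'.2 := (hO hp').2
    have hspos : 0 < s := by rw [hs2]; positivity
    have hspos' : 0 < s' := by rw [hs2']; positivity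
    have hypos : 0 < y := hO3 hy
    have hypos' : 0 < y' := hO3 hy'
    have hhy : 0 < h y := hh y hy
    have hhy' : 0 < h y' := hh y' hy'
    simp only [Prod.mk.injEq] at heq
    obtain ⟨e1, e2⟩ := heq
    -- s * first = second
    have k1 : s * (y + h y / s) = y * s + h y := by
      field_simp
    have k1' : s' * (y' + h y' / s') = y' * s' + h y' := by
      field_simp
    have apos : 0 < y + h y / s := by positivity
    have hss : s = s' := by
      have : s * (y + h y / s) = s' * (y + h y / s) := by
        rw [k1, e2, ← k1', e1]
      exact mul_right_cancel₀ apos.ne' this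
    subst hss
    -- now use injectivity to get y = y'
    have e2' : y * p.2 / p.1 + h y = y' * p.2 / p.1 + h y' := by
      have : y * s + h y = y' * s + h y' := e2
      rw [hs2] at this
      calc y * p.2 / p.1 + h y = y * (p.2 / p.1) + h y := by ring
        _ = y' * (p.2 / p.1) + h y' := this
        _ = y' * p.2 / p.1 + h y' := by ring
    have hyy : y = y' := hinj p hp hy hy' e2'
    rw [hyy]
  · -- SurjOn
    rintro b hb
    rw [← hsurj] at hb
    obtain ⟨p, ⟨hpO, hpy⟩, hpe⟩ := hb
    refine ⟨(p.2.1 / p.1, p.2.2), ⟨⟨(p.1, p.2.1), hpO, rfl⟩, hpy⟩, ?_⟩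
    simp only
    rw [key p.1 p.2.1 p.2.2 hpO]
    exact hpe
end

section
/- Let a, b be real numbers with max(a,b) > 0 and suppose r1, r2, y > 0 satisfy r2 + b·r1 ≠ 0, r2 - a and r2/r1 + b have the same sign (or are both zero), and a + b·y > 0. Define T^{(a,b)}(r1,r2,y) := (y + (a+by)·r1/r2, y·r2/r1 + (a+by), r1·(r2-a)/(r2+b·r1)). Then T^{(a,b)} is an involution on each of the sets D⁺ = {(r1,r2,y) : r1,r2,y > 0, a+b·r1 > 0, r2 - a > 0, a+b·y > 0} and D⁻ = {(r1,r2,y) : r1,r2,y > 0, a+b·r1 < 0, r2 - a < 0, a+b·y > 0}, whenever these sets are nonempty. -/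
/-- The map `T^{(a,b)}`. -/
noncomputable def Tab (a b : ℝ) (p : ℝ × ℝ × ℝ) : ℝ × ℝ × ℝ :=
  (p.2.2 + (a + b * p.2.2) * p.1 / p.2.1,
   p.2.2 * p.2.1 / p.1 + (a + b * p.2.2),
   p.1 * (p.2.1 - a) / (p.2.1 + b * p.1))

lemma inv_lemma (a b r1 r2 y : ℝ) (hr1 : 0 < r1) (hr2 : 0 < r2) (hy : 0 < y)
    (hby : 0 < a + b * y) (hden : r2 + b * r1 ≠ 0) :
    Tab a b (Tab a b (r1, r2, y)) = (r1, r2, y) := by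
  have hnum : y * r2 + (a + b * y) * r1 ≠ 0 := by positivity
  have h1 : r1 ≠ 0 := hr1.ne'
  have h2 : r2 ≠ 0 := hr2.ne'
  simp only [Tab, Prod.mk.injEq]
  refine ⟨?_, ?_, ?_⟩
  · field_simp [show r2 + r1 * b ≠ 0 by rwa [mul_comm r1 b]]; ring
  · field_simp [show r2 + r1 * b ≠ 0 by rwa [mul_comm r1 b]]; ring
  · rw [show y * r2 / r1 + (a + b * y) + b * (y + (a + b * y) * r1 / r2)
        = (r2 + b * r1) * (y * r2 + (a + b * y) * r1) / (r1 * r2) from by field_simp]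
    have hD : (r2 + b * r1) * (y * r2 + (a + b * y) * r1) ≠ 0 := mul_ne_zero hden hnum
    field_simp [show y * r2 + (a + y * b) * r1 ≠ 0 by rwa [mul_comm y b]]
    ring


/-- `T^{(a,b)}` is an involution on each of the sets `D⁺` and `D⁻`
(when nonempty): it maps each set into itself and `T ∘ T = id` there. -/
theorem stmt_4 (a b : ℝ) (hab : 0 < max a b) :
    (({p : ℝ × ℝ × ℝ | 0 < p.1 ∧ 0 < p.2.1 ∧ 0 < p.2.2 ∧
        0 < a + b * p.1 ∧ 0 < p.2.1 - a ∧ 0 < a + b * p.2.2} : Set (ℝ × ℝ × ℝ)).Nonempty →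
      Set.MapsTo (Tab a b)
        {p : ℝ × ℝ × ℝ | 0 < p.1 ∧ 0 < p.2.1 ∧ 0 < p.2.2 ∧
          0 < a + b * p.1 ∧ 0 < p.2.1 - a ∧ 0 < a + b * p.2.2}
        {p : ℝ × ℝ × ℝ | 0 < p.1 ∧ 0 < p.2.1 ∧ 0 < p.2.2 ∧
          0 < a + b * p.1 ∧ 0 < p.2.1 - a ∧ 0 < a + b * p.2.2} ∧
      ∀ p ∈ {p : ℝ × ℝ × ℝ | 0 < p.1 ∧ 0 < p.2.1 ∧ 0 < p.2.2 ∧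
          0 < a + b * p.1 ∧ 0 < p.2.1 - a ∧ 0 < a + b * p.2.2},
        Tab a b (Tab a b p) = p) ∧
    (({p : ℝ × ℝ × ℝ | 0 < p.1 ∧ 0 < p.2.1 ∧ 0 < p.2.2 ∧
        a + b * p.1 < 0 ∧ p.2.1 - a < 0 ∧ 0 < a + b * p.2.2} : Set (ℝ × ℝ × ℝ)).Nonempty →
      Set.MapsTo (Tab a b)
        {p : ℝ × ℝ × ℝ | 0 < p.1 ∧ 0 < p.2.1 ∧ 0 < p.2.2 ∧
          a + b * p.1 < 0 ∧ p.2.1 - a < 0 ∧ 0 < a + b * p.2.2}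
        {p : ℝ × ℝ × ℝ | 0 < p.1 ∧ 0 < p.2.1 ∧ 0 < p.2.2 ∧
          a + b * p.1 < 0 ∧ p.2.1 - a < 0 ∧ 0 < a + b * p.2.2} ∧
      ∀ p ∈ {p : ℝ × ℝ × ℝ | 0 < p.1 ∧ 0 < p.2.1 ∧ 0 < p.2.2 ∧
          a + b * p.1 < 0 ∧ p.2.1 - a < 0 ∧ 0 < a + b * p.2.2},
        Tab a b (Tab a b p) = p) := by
  constructor
  · intro _
    constructor
    · rintro ⟨r1, r2, y⟩ ⟨h1, h2, h3, h4, h5, h6⟩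
      simp only [Set.mem_setOf_eq] at *
      have hden : 0 < r2 + b * r1 := by linarith
      refine ⟨?_, ?_, ?_, ?_, ?_, ?_⟩
      · have := div_pos (mul_pos h6 h1) h2; simp only [Tab]; linarith
      · have := div_pos (mul_pos h3 h2) h1; simp only [Tab]; linarith
      · exact div_pos (mul_pos h1 h5) hden
      · show 0 < a + b * (y + (a + b * y) * r1 / r2)
        rw [show a + b * (y + (a + b * y) * r1 / r2) = (a + b * y) * (r2 + b * r1) / r2 from by
          field_simp; ring]
        exact div_pos (mul_pos h6 hden) h2
      · show 0 < y * r2 / r1 + (a + b * y) - a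
        rw [show y * r2 / r1 + (a + b * y) - a = y * (r2 + b * r1) / r1 from by
          field_simp; ring]
        exact div_pos (mul_pos h3 hden) h1
      · show 0 < a + b * (r1 * (r2 - a) / (r2 + b * r1))
        rw [show a + b * (r1 * (r2 - a) / (r2 + b * r1)) = r2 * (a + b * r1) / (r2 + b * r1) from by
          field_simp; ring]
        exact div_pos (mul_pos h2 h4) hden
    · rintro ⟨r1, r2, y⟩ ⟨h1, h2, h3, h4, h5, h6⟩
      exact inv_lemma a b r1 r2 y h1 h2 h3 h6 (by linarith)
  · intro _
    constructor
    · rintro ⟨r1, r2, y⟩ ⟨h1, h2, h3, h4, h5, h6⟩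
      simp only [Set.mem_setOf_eq] at *
      have hden : r2 + b * r1 < 0 := by linarith
      have hdne : r2 + b * r1 ≠ 0 := hden.ne
      refine ⟨?_, ?_, ?_, ?_, ?_, ?_⟩
      · have := div_pos (mul_pos h6 h1) h2; simp only [Tab]; linarith
      · have := div_pos (mul_pos h3 h2) h1; simp only [Tab]; linarith
      · exact div_pos_of_neg_of_neg (mul_neg_of_pos_of_neg h1 h5) hden
      · show a + b * (y + (a + b * y) * r1 / r2) < 0
        rw [show a + b * (y + (a + b * y) * r1 / r2) = (a + b * y) * (r2 + b * r1) / r2 from by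
          field_simp; ring]
        exact div_neg_of_neg_of_pos (mul_neg_of_pos_of_neg h6 hden) h2
      · show y * r2 / r1 + (a + b * y) - a < 0
        rw [show y * r2 / r1 + (a + b * y) - a = y * (r2 + b * r1) / r1 from by
          field_simp; ring]
        exact div_neg_of_neg_of_pos (mul_neg_of_pos_of_neg h3 hden) h1
      · show 0 < a + b * (r1 * (r2 - a) / (r2 + b * r1))
        rw [show a + b * (r1 * (r2 - a) / (r2 + b * r1)) = r2 * (a + b * r1) / (r2 + b * r1) from by
          field_simp [hdne]; ring]
        exact div_pos_of_neg_of_neg (mul_neg_of_pos_of_neg h2 h4) hden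
    · rintro ⟨r1, r2, y⟩ ⟨h1, h2, h3, h4, h5, h6⟩
      exact inv_lemma a b r1 r2 y h1 h2 h3 h6 (by linarith)
end

section
/- Let a, b be real numbers with max(a,b) > 0, and let O1, O2, O3 ⊂ (0,∞) with O3 not a singleton. If T^{(a,b)}(r1,r2,y) := (y + (a+by)·r1/r2, y·r2/r1 + (a+by), r1·(r2-a)/(r2+b·r1)) is a polymer involution on O1 × O2 × O3 adapted to h(y) = a+by, then either O1 × O2 × O3 ⊆ D⁺_{a,b} or O1 × O2 × O3 ⊆ D⁻_{a,b}, where D^±_{a,b} := {x > 0 : ±(a+bx) > 0} × {x > 0 : ±(x-a) > 0} × {x > 0 : a+bx > 0}. -/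
/-- if `T^{(a,b)}` is a polymer involution on `O1 × O2 × O3`
adapted to `h(y) = a + by` (so in particular `a + by > 0` on `O3`), and `O3`
is not a singleton, then `O1 × O2 × O3 ⊆ D⁺` or `O1 × O2 × O3 ⊆ D⁻`. -/
theorem stmt_5 (a b : ℝ) (hab : 0 < max a b)
    (O1 O2 O3 : Set ℝ)
    (hO1 : O1 ⊆ Set.Ioi (0 : ℝ)) (hO2 : O2 ⊆ Set.Ioi (0 : ℝ)) (hO3 : O3 ⊆ Set.Ioi (0 : ℝ))
    (hO3ns : ∃ y1 ∈ O3, ∃ y2 ∈ O3, y1 ≠ y2)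
    (hpos : ∀ y ∈ O3, 0 < a + b * y)
    (hmap : Set.MapsTo (Tab a b) (O1 ×ˢ O2 ×ˢ O3) (O1 ×ˢ O2 ×ˢ O3))
    (hinv : ∀ p ∈ O1 ×ˢ O2 ×ˢ O3, Tab a b (Tab a b p) = p) :
    (O1 ×ˢ O2 ×ˢ O3 ⊆
      {x : ℝ | 0 < x ∧ 0 < a + b * x} ×ˢ {x : ℝ | 0 < x ∧ 0 < x - a} ×ˢ
        {x : ℝ | 0 < x ∧ 0 < a + b * x}) ∨
    (O1 ×ˢ O2 ×ˢ O3 ⊆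
      {x : ℝ | 0 < x ∧ a + b * x < 0} ×ˢ {x : ℝ | 0 < x ∧ x - a < 0} ×ˢ
        {x : ℝ | 0 < x ∧ 0 < a + b * x}) := by
  obtain ⟨y0, hy0, -, -, -⟩ := hO3ns
  by_cases h1 : O1.Nonempty
  swap
  · left
    rintro ⟨r1, r2, y⟩ ⟨hm1, -, -⟩
    exact absurd ⟨r1, hm1⟩ h1
  by_cases h2 : O2.Nonempty
  swap
  · left
    rintro ⟨r1, r2, y⟩ ⟨-, hm2, -⟩
    exact absurd ⟨r2, hm2⟩ h2
  obtain ⟨r10, hr10⟩ := h1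
  obtain ⟨r20, hr20⟩ := h2
  -- key inequality
  have key : ∀ r1 ∈ O1, ∀ r2 ∈ O2, 0 < (a + b * r1) * (r2 - a) := by
    intro r1 hr1 r2 hr2
    have hr1p : 0 < r1 := hO1 hr1
    have hr2p : 0 < r2 := hO2 hr2
    have hmem := hmap (show (r1, r2, y0) ∈ O1 ×ˢ O2 ×ˢ O3 from ⟨hr1, hr2, hy0⟩)
    obtain ⟨-, -, h3⟩ := hmem
    simp only [Tab] at h3
    set y' := r1 * (r2 - a) / (r2 + b * r1) with hy'
    have hy'pos : 0 < y' := hO3 h3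
    have hby' : 0 < a + b * y' := hpos _ h3
    have hD : r2 + b * r1 ≠ 0 := by
      intro h
      rw [hy', h, div_zero] at hy'pos
      exact lt_irrefl 0 hy'pos
    have heq : a + b * y' = r2 * (a + b * r1) / (r2 + b * r1) := by
      rw [hy']; field_simp; ring
    rw [heq] at hby'
    have hDsq : 0 < (r2 + b * r1) ^ 2 := by positivity
    have h4 : 0 < (r2 * (a + b * r1) / (r2 + b * r1)) * (r1 * (r2 - a) / (r2 + b * r1)) :=
      mul_pos hby' hy'pos
    have h5 : (r2 * (a + b * r1) / (r2 + b * r1)) * (r1 * (r2 - a) / (r2 + b * r1))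
        = r2 * r1 * ((a + b * r1) * (r2 - a)) / (r2 + b * r1) ^ 2 := by
      field_simp
    rw [h5, div_pos_iff] at h4
    rcases h4 with ⟨h4, -⟩ | ⟨-, h4⟩
    · nlinarith [mul_pos hr1p hr2p]
    · exact absurd h4 (by nlinarith)
  have h00 := key r10 hr10 r20 hr20
  rcases lt_trichotomy (a + b * r10) 0 with hσ | hσ | hσ
  · right
    rintro ⟨r1, r2, y⟩ ⟨hm1, hm2, hm3⟩
    have k1 := key r1 hm1 r20 hr20
    have k2 := key r10 hr10 r2 hm2
    refine ⟨⟨hO1 hm1, ?_⟩, ⟨hO2 hm2, ?_⟩, hO3 hm3, hpos _ hm3⟩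
    · nlinarith
    · nlinarith
  · exfalso; rw [hσ, zero_mul] at h00; exact lt_irrefl 0 h00
  · left
    rintro ⟨r1, r2, y⟩ ⟨hm1, hm2, hm3⟩
    have k1 := key r1 hm1 r20 hr20
    have k2 := key r10 hr10 r2 hm2
    refine ⟨⟨hO1 hm1, ?_⟩, ⟨hO2 hm2, ?_⟩, hO3 hm3, hpos _ hm3⟩
    · nlinarith
    · nlinarith
end

section
/- Let A be a positive random variable with A ~ Gamma(λ_A + λ_B, β) and B an independent random variable with B ~ Beta(λ_A, λ_B), where λ_A, λ_B, β > 0. Then AB and A(1-B) are independent, with AB ~ Gamma(λ_A, β) and A(1-B) ~ Gamma(λ_B, β). -/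
open MeasureTheory ProbabilityTheory

/-- The Gamma(a, b) distribution, with density `Γ(a)⁻¹ bᵃ x^{a-1} e^{-bx}` on `(0,∞)`. -/
noncomputable def gammaDist (a b : ℝ) : Measure ℝ :=
  volume.withDensity fun x => ENNReal.ofReal
    (if 0 < x then (Real.Gamma a)⁻¹ * b ^ a * x ^ (a - 1) * Real.exp (-(b * x)) else 0)

/-- The Beta(a, b) distribution, with density
`(Γ(a+b)/(Γ(a)Γ(b))) x^{a-1} (1-x)^{b-1}` on `(0,1)`. -/
noncomputable def betaDist (a b : ℝ) : Measure ℝ :=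
  volume.withDensity fun x => ENNReal.ofReal
    (if 0 < x ∧ x < 1 then
      (Real.Gamma (a + b) / (Real.Gamma a * Real.Gamma b)) * x ^ (a - 1) * (1 - x) ^ (b - 1)
    else 0)

open Real Set
open scoped ENNReal

/-- real density of gammaDist -/
noncomputable def gpdf (a b x : ℝ) : ℝ :=
  if 0 < x then (Real.Gamma a)⁻¹ * b ^ a * x ^ (a - 1) * Real.exp (-(b * x)) else 0

noncomputable def bpdf (a b x : ℝ) : ℝ :=
  if 0 < x ∧ x < 1 then
    (Real.Gamma (a + b) / (Real.Gamma a * Real.Gamma b)) * x ^ (a - 1) * (1 - x) ^ (b - 1)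
  else 0

lemma gammaDist_eq (a b : ℝ) :
    gammaDist a b = volume.withDensity fun x => ENNReal.ofReal (gpdf a b x) := rfl

lemma betaDist_eq (a b : ℝ) :
    betaDist a b = volume.withDensity fun x => ENNReal.ofReal (bpdf a b x) := rfl

lemma measurable_gpdf (a b : ℝ) : Measurable (gpdf a b) := by
  unfold gpdf
  apply Measurable.ite measurableSet_Ioi
  · fun_prop (disch := measurability)
  · fun_prop

lemma measurable_bpdf (a b : ℝ) : Measurable (bpdf a b) := by
  unfold bpdf
  apply Measurable.ite
  · exact (measurableSet_Ioi.inter measurableSet_Iio : MeasurableSet {x : ℝ | 0 < x ∧ x < 1})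
  · fun_prop (disch := measurability)
  · fun_prop

instance gammaDist_sigmaFinite (a b : ℝ) : SigmaFinite (gammaDist a b) := by
  rw [gammaDist_eq]; infer_instance

instance betaDist_sigmaFinite (a b : ℝ) : SigmaFinite (betaDist a b) := by
  rw [betaDist_eq]; infer_instance

instance gammaDist_isProbability (a b : ℝ) [Fact (0 < a)] [Fact (0 < b)] :
    IsProbabilityMeasure (gammaDist a b) := by
  have ha : 0 < a := Fact.out
  have hb : 0 < b := Fact.out
  constructor
  rw [gammaDist_eq, withDensity_apply _ MeasurableSet.univ, Measure.restrict_univ]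
  rw [← lintegral_gammaPDF_eq_one ha hb]
  apply lintegral_congr_ae
  have h0 : ∀ᵐ x : ℝ, x ≠ 0 := by
    rw [ae_iff]
    have : {x : ℝ | ¬ x ≠ 0} = {0} := by ext x; simp
    rw [this]; exact Real.volume_singleton
  filter_upwards [h0] with x hx
  rcases lt_trichotomy x 0 with h | h | h
  · rw [gammaPDF_of_neg h]
    simp [gpdf, not_lt.mpr h.le, h.not_gt]
  · exact absurd h hx
  · rw [gammaPDF_of_nonneg h.le]
    simp only [gpdf, if_pos h]
    congr 1
    ring

lemma withDensity_prod_d (f g : ℝ → ℝ) (hf : Measurable f) (hg : Measurable g) :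
    ((volume.withDensity fun x => ENNReal.ofReal (f x)).prod
      (volume.withDensity fun x => ENNReal.ofReal (g x))) =
    (volume : Measure (ℝ × ℝ)).withDensity
      (fun p => ENNReal.ofReal (f p.1) * ENNReal.ofReal (g p.2)) := by
  refine Measure.prod_eq fun s t hs ht => ?_
  rw [withDensity_apply _ (hs.prod ht), withDensity_apply _ hs, withDensity_apply _ ht,
    Measure.volume_eq_prod, ← Measure.prod_restrict]
  exact lintegral_prod_mul (hf.ennreal_ofReal).aemeasurable (hg.ennreal_ofReal).aemeasurable

/-- The transformation `(a, x) ↦ (ax, a(1-x))`. -/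
def T : ℝ × ℝ → ℝ × ℝ := fun p => (p.1 * p.2, p.1 * (1 - p.2))

lemma measurable_T : Measurable T := by unfold T; fun_prop

def S2 : Set (ℝ × ℝ) := Ioi 0 ×ˢ Ioo 0 1

lemma measurableSet_S2 : MeasurableSet S2 :=
  measurableSet_Ioi.prod measurableSet_Ioo

lemma T_image : T '' S2 = Ioi 0 ×ˢ Ioi 0 := by
  ext ⟨u, v⟩
  simp only [S2, T, mem_image, mem_prod, mem_Ioi, mem_Ioo, Prod.exists, Prod.mk.injEq]
  constructor
  · rintro ⟨a, x, ⟨ha, hx0, hx1⟩, rfl, rfl⟩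
    exact ⟨mul_pos ha hx0, mul_pos ha (by linarith)⟩
  · rintro ⟨hu, hv⟩
    refine ⟨u + v, u / (u + v), ⟨by linarith, div_pos hu (by linarith),
      (div_lt_one (by linarith)).mpr (by linarith)⟩, ?_, ?_⟩
    · field_simp
    · field_simp; try ring

lemma T_injOn : InjOn T S2 := by
  rintro ⟨a, x⟩ ⟨ha, hx0, hx1⟩ ⟨a', x'⟩ ⟨ha', hx0', hx1'⟩ h
  simp only [T, Prod.mk.injEq] at h
  have hsum : a = a' := by nlinarith [h.1, h.2]
  subst hsum
  have : x = x' := by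
    have := h.1
    rw [mul_eq_mul_left_iff] at this
    rcases this with h | h
    · exact h
    · simp only [mem_Ioi] at ha; exact absurd h ha.ne'
  simp [this]

/-- Jacobian matrix CLM of `T`. -/
noncomputable def Tderiv (p : ℝ × ℝ) : ℝ × ℝ →L[ℝ] ℝ × ℝ :=
  LinearMap.toContinuousLinearMap (Matrix.toLin (Module.Basis.finTwoProd ℝ) (Module.Basis.finTwoProd ℝ)
    !![p.2, p.1; 1 - p.2, -p.1])

lemma hasFDerivAt_T (p : ℝ × ℝ) : HasFDerivAt T (Tderiv p) p := by
  unfold T Tderiv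
  rw [Matrix.toLin_finTwoProd_toContinuousLinearMap]
  have h1 : HasFDerivAt (fun p : ℝ × ℝ => p.1 * p.2)
      (p.1 • ContinuousLinearMap.snd ℝ ℝ ℝ + p.2 • ContinuousLinearMap.fst ℝ ℝ ℝ) p :=
    hasFDerivAt_fst.mul hasFDerivAt_snd
  have h2 : HasFDerivAt (fun p : ℝ × ℝ => p.1 * (1 - p.2))
      (p.1 • (0 - ContinuousLinearMap.snd ℝ ℝ ℝ) +
        (1 - p.2) • ContinuousLinearMap.fst ℝ ℝ ℝ) p :=
    hasFDerivAt_fst.mul ((hasFDerivAt_const 1 p).sub hasFDerivAt_snd)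
  refine (h1.prodMk h2).congr_fderiv ?_
  congr 1
  · module
  · module

lemma Tderiv_det (p : ℝ × ℝ) : (Tderiv p).det = -p.1 := by
  unfold Tderiv
  simp only [ContinuousLinearMap.det, LinearMap.coe_toContinuousLinearMap, LinearMap.det_toLin,
    Matrix.det_fin_two_of]
  ring

lemma gpdf_nonneg {a b : ℝ} (ha : 0 < a) (hb : 0 < b) (x : ℝ) : 0 ≤ gpdf a b x := by
  unfold gpdf
  split_ifs with h
  · have := Real.Gamma_pos_of_pos ha
    positivity
  · exact le_refl 0

lemma bpdf_nonneg {a b : ℝ} (ha : 0 < a) (hb : 0 < b) (x : ℝ) : 0 ≤ bpdf a b x := by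
  unfold bpdf
  split_ifs with h
  · have h1 := Real.Gamma_pos_of_pos ha
    have h2 := Real.Gamma_pos_of_pos hb
    have h3 := Real.Gamma_pos_of_pos (by linarith : 0 < a + b)
    have h4 : (0:ℝ) < 1 - x := by linarith [h.2]
    have h5 := h.1
    positivity
  · exact le_refl 0

lemma density_identity {lA lB b a x : ℝ} (hlA : 0 < lA) (hlB : 0 < lB) (hb : 0 < b)
    (ha : 0 < a) (hx0 : 0 < x) (hx1 : x < 1) :
    a * (gpdf lA b (a * x) * gpdf lB b (a * (1 - x))) =
      gpdf (lA + lB) b a * bpdf lA lB x := by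
  have h1x : 0 < 1 - x := by linarith
  have hu : 0 < a * x := mul_pos ha hx0
  have hv : 0 < a * (1 - x) := mul_pos ha h1x
  rw [gpdf, gpdf, gpdf, bpdf, if_pos hu, if_pos hv, if_pos ha, if_pos ⟨hx0, hx1⟩]
  have e1 : (a * x) ^ (lA - 1) = a ^ (lA - 1) * x ^ (lA - 1) :=
    Real.mul_rpow ha.le hx0.le
  have e2 : (a * (1 - x)) ^ (lB - 1) = a ^ (lB - 1) * (1 - x) ^ (lB - 1) :=
    Real.mul_rpow ha.le h1x.le
  have e3 : b ^ (lA + lB) = b ^ lA * b ^ lB := Real.rpow_add hb _ _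
  have e4 : a ^ (lA + lB - 1) = a ^ (lA - 1) * a ^ (lB - 1) * a := by
    rw [show lA + lB - 1 = (lA - 1) + (lB - 1) + 1 by ring, Real.rpow_add ha,
      Real.rpow_add ha, Real.rpow_one]
  have e5 : Real.exp (-(b * (a * x))) * Real.exp (-(b * (a * (1 - x)))) =
      Real.exp (-(b * a)) := by
    rw [← Real.exp_add]; congr 1; ring
  have hGA := (Real.Gamma_pos_of_pos hlA).ne'
  have hGB := (Real.Gamma_pos_of_pos hlB).ne'
  have hGAB := (Real.Gamma_pos_of_pos (by linarith : 0 < lA + lB)).ne'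
  rw [e1, e2, e3, e4, ← e5]
  field_simp

lemma setLIntegral_zero_off {f : ℝ × ℝ → ℝ≥0∞} {s A : Set (ℝ × ℝ)}
    (hs : MeasurableSet s) (h0 : ∀ p ∉ s, f p = 0) :
    ∫⁻ p in A, f p = ∫⁻ p in s ∩ A, f p := by
  have hf : f = s.indicator f := by
    funext p
    by_cases hp : p ∈ s
    · rw [Set.indicator_of_mem hp]
    · rw [Set.indicator_of_notMem hp, h0 p hp]
  conv_lhs => rw [hf]
  rw [lintegral_indicator hs _, Measure.restrict_restrict hs]

lemma map_T_eq {lA lB b : ℝ} (hlA : 0 < lA) (hlB : 0 < lB) (hb : 0 < b) :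
    ((gammaDist (lA + lB) b).prod (betaDist lA lB)).map T =
      (gammaDist lA b).prod (gammaDist lB b) := by
  have hlAB : 0 < lA + lB := by linarith
  rw [gammaDist_eq, gammaDist_eq, gammaDist_eq, betaDist_eq,
    withDensity_prod_d _ _ (measurable_gpdf _ _) (measurable_bpdf _ _),
    withDensity_prod_d _ _ (measurable_gpdf _ _) (measurable_gpdf _ _)]
  set F : ℝ × ℝ → ℝ≥0∞ :=
    fun p => ENNReal.ofReal (gpdf (lA + lB) b p.1) * ENNReal.ofReal (bpdf lA lB p.2) with hF
  set G : ℝ × ℝ → ℝ≥0∞ :=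
    fun p => ENNReal.ofReal (gpdf lA b p.1) * ENNReal.ofReal (gpdf lB b p.2) with hG
  have hFmeas : Measurable F := by
    rw [hF]
    apply Measurable.mul (f := fun p : ℝ × ℝ => ENNReal.ofReal (gpdf (lA + lB) b p.1)) (g := fun p : ℝ × ℝ => ENNReal.ofReal (bpdf lA lB p.2))
    · exact ((measurable_gpdf _ _).comp measurable_fst).ennreal_ofReal
    · exact ((measurable_bpdf _ _).comp measurable_snd).ennreal_ofReal
  have hGmeas : Measurable G := by
    rw [hG]
    apply Measurable.mul (f := fun p : ℝ × ℝ => ENNReal.ofReal (gpdf lA b p.1)) (g := fun p : ℝ × ℝ => ENNReal.ofReal (gpdf lB b p.2))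
    · exact ((measurable_gpdf _ _).comp measurable_fst).ennreal_ofReal
    · exact ((measurable_gpdf _ _).comp measurable_snd).ennreal_ofReal
  have hF0 : ∀ p ∉ S2, F p = 0 := by
    rintro ⟨a, x⟩ hp
    simp only [S2, mem_prod, mem_Ioi, mem_Ioo, not_and_or, not_lt] at hp
    rcases hp with h | h
    · have : gpdf (lA + lB) b a = 0 := by rw [gpdf, if_neg (not_lt.mpr h)]
      simp [hF, this]
    · have : bpdf lA lB x = 0 := by
        rw [bpdf, if_neg]
        rintro ⟨h1, h2⟩
        rcases h with h | h
        · exact absurd h1 (not_lt.mpr h)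
        · exact absurd h2 (not_lt.mpr h)
      simp [hF, this]
  have hG0 : ∀ p ∉ (Ioi (0:ℝ) ×ˢ Ioi (0:ℝ)), G p = 0 := by
    rintro ⟨u, v⟩ hp
    simp only [mem_prod, mem_Ioi, not_and_or, not_lt] at hp
    rcases hp with h | h
    · have : gpdf lA b u = 0 := by rw [gpdf, if_neg (not_lt.mpr h)]
      simp [hG, this]
    · have : gpdf lB b v = 0 := by rw [gpdf, if_neg (not_lt.mpr h)]
      simp [hG, this]
  ext Sm hSm
  rw [Measure.map_apply measurable_T hSm, withDensity_apply _ (measurable_T hSm),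
    withDensity_apply _ hSm]
  symm
  calc ∫⁻ p in Sm, G p
      = ∫⁻ p in (Ioi (0:ℝ) ×ˢ Ioi (0:ℝ)) ∩ Sm, G p :=
        setLIntegral_zero_off (measurableSet_Ioi.prod measurableSet_Ioi) hG0
    _ = ∫⁻ p in T '' S2, Sm.indicator G p := by
        rw [T_image, lintegral_indicator hSm, Measure.restrict_restrict hSm, inter_comm]
    _ = ∫⁻ p in S2, ENNReal.ofReal |(Tderiv p).det| * Sm.indicator G (T p) :=
        lintegral_image_eq_lintegral_abs_det_fderiv_mul volume measurableSet_S2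
          (fun p _ => (hasFDerivAt_T p).hasFDerivWithinAt) T_injOn _
    _ = ∫⁻ p in S2, (T ⁻¹' Sm).indicator F p := by
        apply setLIntegral_congr_fun measurableSet_S2
        rintro ⟨a, x⟩ hp
        beta_reduce
        obtain ⟨ha, hx0, hx1⟩ : 0 < a ∧ 0 < x ∧ x < 1 := by
          simpa [S2, mem_prod] using hp
        have hdet : |(Tderiv (a, x)).det| = a := by
          rw [Tderiv_det]; simp [abs_of_pos ha]
        by_cases hmem : (a, x) ∈ T ⁻¹' Sm
        · rw [Set.indicator_of_mem hmem,
            Set.indicator_of_mem (show T (a, x) ∈ Sm from hmem), hdet]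
          show ENNReal.ofReal a * G (T (a, x)) = F (a, x)
          simp only [hF, hG, T]
          rw [← ENNReal.ofReal_mul (gpdf_nonneg hlAB hb _),
            ← ENNReal.ofReal_mul (gpdf_nonneg hlA hb _),
            ← ENNReal.ofReal_mul ha.le]
          exact congrArg ENNReal.ofReal (density_identity hlA hlB hb ha hx0 hx1)
        · rw [Set.indicator_of_notMem hmem,
            Set.indicator_of_notMem (show T (a, x) ∉ Sm from hmem), mul_zero]
    _ = ∫⁻ p in S2 ∩ T ⁻¹' Sm, F p := by
        rw [lintegral_indicator (measurable_T hSm) _, Measure.restrict_restrict (measurable_T hSm),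
          inter_comm]
    _ = ∫⁻ p in T ⁻¹' Sm, F p := (setLIntegral_zero_off measurableSet_S2 hF0).symm

/-- if `A ~ Gamma(λA+λB, β)` and `B ~ Beta(λA, λB)` are independent,
then `AB` and `A(1-B)` are independent with `AB ~ Gamma(λA,β)`, `A(1-B) ~ Gamma(λB,β)`. -/
theorem stmt_8 {Ω : Type*} [MeasurableSpace Ω] (μ : Measure Ω) [IsProbabilityMeasure μ]
    (A B : Ω → ℝ) (hA : Measurable A) (hB : Measurable B)
    (lA lB b : ℝ) (hlA : 0 < lA) (hlB : 0 < lB) (hb : 0 < b)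
    (hAdist : μ.map A = gammaDist (lA + lB) b) (hBdist : μ.map B = betaDist lA lB)
    (hind : IndepFun A B μ) :
    IndepFun (fun ω => A ω * B ω) (fun ω => A ω * (1 - B ω)) μ ∧
    μ.map (fun ω => A ω * B ω) = gammaDist lA b ∧
    μ.map (fun ω => A ω * (1 - B ω)) = gammaDist lB b := by
  haveI := Fact.mk hlA
  haveI := Fact.mk hlB
  haveI := Fact.mk hb
  have hU : Measurable (fun ω => A ω * B ω) := hA.mul hB
  have hV : Measurable (fun ω => A ω * (1 - B ω)) := hA.mul (measurable_const.sub hB)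
  have hjoint : μ.map (fun ω => (A ω, B ω)) = (gammaDist (lA + lB) b).prod (betaDist lA lB) := by
    rw [← hAdist, ← hBdist]
    exact (indepFun_iff_map_prod_eq_prod_map_map hA.aemeasurable hB.aemeasurable).mp hind
  have hmapUV : μ.map (fun ω => (A ω * B ω, A ω * (1 - B ω))) =
      (gammaDist lA b).prod (gammaDist lB b) := by
    have h1 : (fun ω => (A ω * B ω, A ω * (1 - B ω))) = T ∘ (fun ω => (A ω, B ω)) := rfl
    rw [h1, ← Measure.map_map measurable_T (hA.prodMk hB), hjoint, map_T_eq hlA hlB hb]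
  have hU' : μ.map (fun ω => A ω * B ω) = gammaDist lA b := by
    have h1 : (fun ω => A ω * B ω) =
        Prod.fst ∘ (fun ω => (A ω * B ω, A ω * (1 - B ω))) := rfl
    rw [h1, ← Measure.map_map measurable_fst (hU.prodMk hV), hmapUV, Measure.map_fst_prod]
    simp
  have hV' : μ.map (fun ω => A ω * (1 - B ω)) = gammaDist lB b := by
    have h1 : (fun ω => A ω * (1 - B ω)) =
        Prod.snd ∘ (fun ω => (A ω * B ω, A ω * (1 - B ω))) := rfl
    rw [h1, ← Measure.map_map measurable_snd (hU.prodMk hV), hmapUV, Measure.map_snd_prod]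
    simp
  refine ⟨?_, hU', hV'⟩
  rw [indepFun_iff_map_prod_eq_prod_map_map hU.aemeasurable hV.aemeasurable, hmapUV, hU', hV']
end

section
/- Let A ~ Beta(p,q) and B ~ Beta(p+q,r) be independent, with p, q, r > 0. Then C := (1-B)/(1-AB) and D := 1-AB are independent, with C ~ Beta(r,q) and D ~ Beta(r+q,p). -/
open MeasureTheory ProbabilityTheory

namespace SW

open Set

/-- The Beta density function. -/
noncomputable def betaPdf (a b : ℝ) (x : ℝ) : ℝ :=
  if 0 < x ∧ x < 1 then
    (Real.Gamma (a + b) / (Real.Gamma a * Real.Gamma b)) * x ^ (a - 1) * (1 - x) ^ (b - 1)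
  else 0

lemma betaDist_eq (a b : ℝ) :
    betaDist a b = volume.withDensity fun x => ENNReal.ofReal (betaPdf a b x) := rfl

lemma betaPdf_nonneg {a b : ℝ} (ha : 0 < a) (hb : 0 < b) (x : ℝ) : 0 ≤ betaPdf a b x := by
  unfold betaPdf
  split
  · rename_i h
    have h1 : (0:ℝ) ≤ x := h.1.le
    have h2 : (0:ℝ) ≤ 1 - x := by linarith [h.2]
    have g1 := Real.Gamma_pos_of_pos ha
    have g2 := Real.Gamma_pos_of_pos hb
    have g3 := Real.Gamma_pos_of_pos (show (0:ℝ) < a + b by linarith)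
    positivity
  · exact le_refl 0

lemma measurable_betaPdf (a b : ℝ) : Measurable (betaPdf a b) := by
  unfold betaPdf
  refine Measurable.ite ?_ ?_ measurable_const
  · exact (measurableSet_Ioo : MeasurableSet (Ioo (0:ℝ) 1))
  · exact ((measurable_id'.pow_const _).const_mul _).mul
      ((measurable_const.sub measurable_id').pow_const _)

lemma complex_beta_eq {a b : ℝ} (x : ℝ) (hx : x ∈ Icc (0:ℝ) 1) :
    ((x ^ (a - 1) * (1 - x) ^ (b - 1) : ℝ) : ℂ)
      = (x : ℂ) ^ ((a : ℂ) - 1) * ((1 : ℂ) - (x : ℂ)) ^ ((b : ℂ) - 1) := by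
  rw [Complex.ofReal_mul, Complex.ofReal_cpow hx.1,
    Complex.ofReal_cpow (by linarith [hx.2] : (0:ℝ) ≤ 1 - x)]
  push_cast
  ring

lemma integrableOn_betaCore {a b : ℝ} (ha : 0 < a) (hb : 0 < b) :
    IntegrableOn (fun x : ℝ => x ^ (a - 1) * (1 - x) ^ (b - 1)) (Ioc 0 1) volume := by
  have hC : IntervalIntegrable
      (fun x : ℝ => (x : ℂ) ^ ((a : ℂ) - 1) * ((1 : ℂ) - (x : ℂ)) ^ ((b : ℂ) - 1))
      volume 0 1 :=
    Complex.betaIntegral_convergent (by simp [ha]) (by simp [hb])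
  rw [intervalIntegrable_iff_integrableOn_Ioc_of_le zero_le_one] at hC
  refine IntegrableOn.congr_fun hC.re (fun x hx => ?_) measurableSet_Ioc
  have hx' : x ∈ Icc (0:ℝ) 1 := Ioc_subset_Icc_self hx
  simp only [← complex_beta_eq x hx', Complex.ofReal_re, RCLike.re_to_complex]

lemma integral_betaCore {a b : ℝ} (ha : 0 < a) (hb : 0 < b) :
    ∫ x in Ioc (0:ℝ) 1, x ^ (a - 1) * (1 - x) ^ (b - 1) =
      Real.Gamma a * Real.Gamma b / Real.Gamma (a + b) := by
  have h := Complex.Gamma_mul_Gamma_eq_betaIntegral (s := (a:ℂ)) (t := (b:ℂ))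
    (by simp [ha]) (by simp [hb])
  have hbeta : Complex.betaIntegral (a:ℂ) (b:ℂ)
      = ((∫ x in (0:ℝ)..1, x ^ (a - 1) * (1 - x) ^ (b - 1) : ℝ) : ℂ) := by
    rw [Complex.betaIntegral,
      show ((∫ x in (0:ℝ)..1, x ^ (a - 1) * (1 - x) ^ (b - 1) : ℝ) : ℂ)
          = ∫ x in (0:ℝ)..1, ((x ^ (a - 1) * (1 - x) ^ (b - 1) : ℝ) : ℂ)
        from (RCLike.intervalIntegral_ofReal (𝕜 := ℂ)).symm]
    refine intervalIntegral.integral_congr fun x hx => ?_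
    rw [Set.uIcc_of_le zero_le_one] at hx
    exact (complex_beta_eq x hx).symm
  rw [hbeta, show ((a:ℂ) + b) = ((a + b : ℝ) : ℂ) by push_cast; ring,
    Complex.Gamma_ofReal, Complex.Gamma_ofReal, Complex.Gamma_ofReal,
    ← Complex.ofReal_mul, ← Complex.ofReal_mul] at h
  have h' : Real.Gamma a * Real.Gamma b
      = Real.Gamma (a + b) * ∫ x in (0:ℝ)..1, x ^ (a - 1) * (1 - x) ^ (b - 1) :=
    Complex.ofReal_inj.mp h
  have hab : Real.Gamma (a + b) ≠ 0 := (Real.Gamma_pos_of_pos (by linarith)).ne'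
  rw [← intervalIntegral.integral_of_le zero_le_one]
  rw [eq_div_iff hab]
  linarith [h']

lemma isProbabilityMeasure_betaDist {a b : ℝ} (ha : 0 < a) (hb : 0 < b) :
    IsProbabilityMeasure (betaDist a b) := by
  have hind : betaPdf a b = (Ioo 0 1).indicator
      (fun x => Real.Gamma (a + b) / (Real.Gamma a * Real.Gamma b) *
        (x ^ (a - 1) * (1 - x) ^ (b - 1))) := by
    funext x
    by_cases h : 0 < x ∧ x < 1 <;>
      simp [betaPdf, Set.indicator_apply, Set.mem_Ioo, h, mul_assoc]
  have hcore := integrableOn_betaCore ha hb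
  have hint : Integrable (betaPdf a b) := by
    rw [hind, integrable_indicator_iff measurableSet_Ioo]
    exact ((hcore.mono_set Ioo_subset_Ioc_self).const_mul _)
  have hval : ∫ x, betaPdf a b x = 1 := by
    have hg1 := Real.Gamma_pos_of_pos ha
    have hg2 := Real.Gamma_pos_of_pos hb
    have hg3 := Real.Gamma_pos_of_pos (show (0:ℝ) < a + b by linarith)
    calc ∫ x, betaPdf a b x
        = ∫ x in Ioo (0:ℝ) 1, Real.Gamma (a + b) / (Real.Gamma a * Real.Gamma b) *
            (x ^ (a - 1) * (1 - x) ^ (b - 1)) := by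
          rw [hind, integral_indicator measurableSet_Ioo]
      _ = ∫ x in Ioc (0:ℝ) 1, Real.Gamma (a + b) / (Real.Gamma a * Real.Gamma b) *
            (x ^ (a - 1) * (1 - x) ^ (b - 1)) := (integral_Ioc_eq_integral_Ioo).symm
      _ = Real.Gamma (a + b) / (Real.Gamma a * Real.Gamma b) *
            ∫ x in Ioc (0:ℝ) 1, x ^ (a - 1) * (1 - x) ^ (b - 1) := integral_const_mul _ _
      _ = Real.Gamma (a + b) / (Real.Gamma a * Real.Gamma b) *
            (Real.Gamma a * Real.Gamma b / Real.Gamma (a + b)) := by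
          rw [integral_betaCore ha hb]
      _ = 1 := by field_simp
  constructor
  rw [betaDist_eq, withDensity_apply _ MeasurableSet.univ, Measure.restrict_univ,
    ← ofReal_integral_eq_lintegral_ofReal hint
      (Filter.Eventually.of_forall (betaPdf_nonneg ha hb)),
    hval, ENNReal.ofReal_one]

lemma betaDist_prod {a b c d : ℝ} (ha : 0 < a) (hb : 0 < b) (hc : 0 < c) (hd : 0 < d) :
    (betaDist a b).prod (betaDist c d) =
      (volume : Measure (ℝ × ℝ)).withDensity
        (fun z => ENNReal.ofReal (betaPdf a b z.1) * ENNReal.ofReal (betaPdf c d z.2)) := by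
  haveI := isProbabilityMeasure_betaDist ha hb
  haveI := isProbabilityMeasure_betaDist hc hd
  refine Measure.prod_eq fun s t hs ht => ?_
  rw [withDensity_apply _ (hs.prod ht), MeasureTheory.Measure.volume_eq_prod, ← Measure.prod_restrict,
    lintegral_prod_mul (f := fun x => ENNReal.ofReal (betaPdf a b x))
      (g := fun x => ENNReal.ofReal (betaPdf c d x))
      (measurable_betaPdf a b).ennreal_ofReal.aemeasurable
      (measurable_betaPdf c d).ennreal_ofReal.aemeasurable,
    betaDist_eq, betaDist_eq, withDensity_apply _ hs, withDensity_apply _ ht]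

/-- The map `(a,b) ↦ ((1-b)/(1-ab), 1-ab)`. -/
noncomputable def mapCD : ℝ × ℝ → ℝ × ℝ :=
  fun z => ((1 - z.2) / (1 - z.1 * z.2), 1 - z.1 * z.2)

lemma measurable_mapCD : Measurable mapCD :=
  ((measurable_const.sub measurable_snd).div
    (measurable_const.sub (measurable_fst.mul measurable_snd))).prodMk
    (measurable_const.sub (measurable_fst.mul measurable_snd))

/-- The open unit square. -/
def betaSq : Set (ℝ × ℝ) := Ioo 0 1 ×ˢ Ioo 0 1

lemma measurableSet_betaSq : MeasurableSet betaSq :=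
  measurableSet_Ioo.prod measurableSet_Ioo

lemma mem_betaSq {z : ℝ × ℝ} :
    z ∈ betaSq ↔ (0 < z.1 ∧ z.1 < 1) ∧ (0 < z.2 ∧ z.2 < 1) := by
  simp [betaSq, Set.mem_prod, Set.mem_Ioo]

lemma one_sub_mul_pos {z : ℝ × ℝ} (hz : z ∈ betaSq) : 0 < 1 - z.1 * z.2 := by
  obtain ⟨⟨ha0, ha1⟩, hb0, hb1⟩ := mem_betaSq.mp hz
  nlinarith

lemma mapCD_mem {z : ℝ × ℝ} (hz : z ∈ betaSq) : mapCD z ∈ betaSq := by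
  have ht := one_sub_mul_pos hz
  obtain ⟨⟨ha0, ha1⟩, hb0, hb1⟩ := mem_betaSq.mp hz
  refine mem_betaSq.mpr ⟨⟨?_, ?_⟩, ?_, ?_⟩ <;> simp only [mapCD]
  · exact div_pos (by linarith) ht
  · rw [div_lt_one ht]; nlinarith
  · exact ht
  · nlinarith

lemma mapCD_involution {z : ℝ × ℝ} (hz : z ∈ betaSq) : mapCD (mapCD z) = z := by
  have ht := (one_sub_mul_pos hz).ne'
  obtain ⟨⟨ha0, ha1⟩, hb0, hb1⟩ := mem_betaSq.mp hz
  unfold mapCD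
  apply Prod.ext
  · show (1 - (1 - z.1 * z.2)) / (1 - (1 - z.2) / (1 - z.1 * z.2) * (1 - z.1 * z.2)) = z.1
    rw [div_mul_cancel₀ _ ht]
    rw [show (1:ℝ) - (1 - z.2) = z.2 by ring, show (1:ℝ) - (1 - z.1 * z.2) = z.1 * z.2 by ring]
    exact mul_div_cancel_right₀ z.1 hb0.ne'
  · show 1 - (1 - z.2) / (1 - z.1 * z.2) * (1 - z.1 * z.2) = z.2
    rw [div_mul_cancel₀ _ ht]; ring

lemma injOn_mapCD : Set.InjOn mapCD betaSq := fun x hx y hy h => by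
  rw [← mapCD_involution hx, ← mapCD_involution hy, h]

/-- Derivative of `mapCD`. -/
noncomputable def mapCDDeriv (z : ℝ × ℝ) : ℝ × ℝ →L[ℝ] ℝ × ℝ :=
  LinearMap.toContinuousLinearMap (Matrix.toLin (Module.Basis.finTwoProd ℝ) (Module.Basis.finTwoProd ℝ)
    !![z.2 * (1 - z.2) / (1 - z.1 * z.2) ^ 2, (z.1 - 1) / (1 - z.1 * z.2) ^ 2; -z.2, -z.1])

lemma hasFDerivAt_mapCD {z : ℝ × ℝ} (ht : 1 - z.1 * z.2 ≠ 0) :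
    HasFDerivAt mapCD (mapCDDeriv z) z := by
  have hden : HasFDerivAt (fun w : ℝ × ℝ => 1 - w.1 * w.2)
      ((0 : ℝ × ℝ →L[ℝ] ℝ) - (z.1 • ContinuousLinearMap.snd ℝ ℝ ℝ +
        z.2 • ContinuousLinearMap.fst ℝ ℝ ℝ)) z :=
    (hasFDerivAt_const (1:ℝ) z).sub (hasFDerivAt_fst.mul hasFDerivAt_snd)
  have hnum : HasFDerivAt (fun w : ℝ × ℝ => 1 - w.2)
      ((0 : ℝ × ℝ →L[ℝ] ℝ) - ContinuousLinearMap.snd ℝ ℝ ℝ) z :=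
    (hasFDerivAt_const (1:ℝ) z).sub hasFDerivAt_snd
  have hinv := (hasFDerivAt_inv ht).comp z hden
  have hmain := (hnum.mul hinv).prodMk hden
  have hfun : mapCD = fun w : ℝ × ℝ => ((1 - w.2) * (1 - w.1 * w.2)⁻¹, 1 - w.1 * w.2) := by
    funext w
    simp [mapCD, div_eq_mul_inv]
  rw [hfun]
  refine hmain.congr_fderiv (Eq.symm ?_)
  unfold mapCDDeriv
  rw [Matrix.toLin_finTwoProd_toContinuousLinearMap]
  apply ContinuousLinearMap.ext
  rintro ⟨u, v⟩
  have h2 : (1 - z.1 * z.2) ^ 2 ≠ 0 := pow_ne_zero 2 ht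
  apply Prod.ext
  · show z.2 * (1 - z.2) / (1 - z.1 * z.2) ^ 2 * u + (z.1 - 1) / (1 - z.1 * z.2) ^ 2 * v = _
    simp only [ContinuousLinearMap.prod_apply, ContinuousLinearMap.add_apply,
      ContinuousLinearMap.smul_apply, ContinuousLinearMap.coe_fst', ContinuousLinearMap.coe_snd',
      ContinuousLinearMap.comp_apply, ContinuousLinearMap.smulRight_apply,
      ContinuousLinearMap.sub_apply, ContinuousLinearMap.zero_apply,
      ContinuousLinearMap.one_apply, smul_eq_mul, ContinuousLinearMap.toSpanSingleton_apply,
      Function.comp_apply]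
    field_simp
    ring
  · show -z.2 * u + -z.1 * v = _
    simp only [ContinuousLinearMap.prod_apply, ContinuousLinearMap.add_apply,
      ContinuousLinearMap.smul_apply, ContinuousLinearMap.coe_fst', ContinuousLinearMap.coe_snd',
      ContinuousLinearMap.sub_apply, ContinuousLinearMap.zero_apply, smul_eq_mul]
    ring

lemma det_mapCDDeriv {z : ℝ × ℝ} (ht : 1 - z.1 * z.2 ≠ 0) :
    (mapCDDeriv z).det = -(z.2 / (1 - z.1 * z.2)) := by
  unfold mapCDDeriv
  simp only [LinearMap.det_toContinuousLinearMap, LinearMap.det_toLin, Matrix.det_fin_two_of]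
  rw [div_mul_eq_mul_div, div_mul_eq_mul_div, div_sub_div_same, div_eq_iff (pow_ne_zero 2 ht),
    neg_mul, pow_two, ← mul_assoc, div_mul_cancel₀ _ ht]
  ring

lemma density_identity {p q r : ℝ} (hp : 0 < p) (hq : 0 < q) (hr : 0 < r)
    {z : ℝ × ℝ} (hz : z ∈ betaSq) :
    ENNReal.ofReal |(mapCDDeriv z).det| *
      (ENNReal.ofReal (betaPdf r q (mapCD z).1) * ENNReal.ofReal (betaPdf (r + q) p (mapCD z).2)) =
    ENNReal.ofReal (betaPdf p q z.1) * ENNReal.ofReal (betaPdf (p + q) r z.2) := by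
  obtain ⟨⟨ha0, ha1⟩, hb0, hb1⟩ := mem_betaSq.mp hz
  have ht : 0 < 1 - z.1 * z.2 := one_sub_mul_pos hz
  have h1a : (0:ℝ) < 1 - z.1 := by linarith
  have h1b : (0:ℝ) < 1 - z.2 := by linarith
  have hc0 : 0 < (1 - z.2) / (1 - z.1 * z.2) := div_pos h1b ht
  have hc1 : (1 - z.2) / (1 - z.1 * z.2) < 1 := by rw [div_lt_one ht]; nlinarith
  have hd1 : 1 - z.1 * z.2 < 1 := by nlinarith
  rw [det_mapCDDeriv ht.ne', abs_neg, abs_of_pos (div_pos hb0 ht),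
    show mapCD z = ((1 - z.2) / (1 - z.1 * z.2), 1 - z.1 * z.2) from rfl]
  rw [← ENNReal.ofReal_mul (betaPdf_nonneg hr hq _),
    ← ENNReal.ofReal_mul (div_pos hb0 ht).le,
    ← ENNReal.ofReal_mul (betaPdf_nonneg hp hq _)]
  congr 1
  unfold betaPdf
  rw [if_pos ⟨hc0, hc1⟩, if_pos ⟨ht, hd1⟩, if_pos ⟨ha0, ha1⟩, if_pos ⟨hb0, hb1⟩]
  have hKrw : ∀ u v : ℝ, 0 < u → 0 < v →
      Real.Gamma (u + v) / (Real.Gamma u * Real.Gamma v)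
        = Real.exp (Real.log (Real.Gamma (u + v))
            - (Real.log (Real.Gamma u) + Real.log (Real.Gamma v))) := by
    intro u v hu hv
    have g1 := Real.Gamma_pos_of_pos hu
    have g2 := Real.Gamma_pos_of_pos hv
    have g3 := Real.Gamma_pos_of_pos (show (0:ℝ) < u + v by linarith)
    rw [← Real.log_mul g1.ne' g2.ne', ← Real.log_div g3.ne' (mul_pos g1 g2).ne',
      Real.exp_log (div_pos g3 (mul_pos g1 g2))]
  rw [hKrw r q hr hq, hKrw (r + q) p (by linarith) hp, hKrw p q hp hq,
    hKrw (p + q) r (by linarith) hr,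
    show p + q + r = r + q + p from by ring,
    show (1:ℝ) - (1 - z.2) / (1 - z.1 * z.2) = z.2 * (1 - z.1) / (1 - z.1 * z.2) from by
      rw [eq_div_iff ht.ne', sub_mul, div_mul_cancel₀ _ ht.ne']; ring,
    show (1:ℝ) - (1 - z.1 * z.2) = z.1 * z.2 from by ring,
    show z.2 / (1 - z.1 * z.2) = Real.exp (Real.log z.2 - Real.log (1 - z.1 * z.2)) from by
      rw [← Real.log_div hb0.ne' ht.ne', Real.exp_log (div_pos hb0 ht)]]
  have he : ∀ x y : ℝ, 0 < x → x ^ y = Real.exp (Real.log x * y) :=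
    fun x y hx => Real.rpow_def_of_pos hx y
  rw [he _ _ hc0, he _ _ (show (0:ℝ) < z.2 * (1 - z.1) / (1 - z.1 * z.2) by positivity),
    he _ _ ht, he _ _ (mul_pos ha0 hb0), he _ _ ha0, he _ _ h1a, he _ _ hb0, he _ _ h1b,
    Real.log_div h1b.ne' ht.ne', Real.log_div (mul_pos hb0 h1a).ne' ht.ne',
    Real.log_mul hb0.ne' h1a.ne', Real.log_mul ha0.ne' hb0.ne']
  simp only [← Real.exp_add]
  rw [Real.exp_eq_exp]
  ring

lemma betaPdf_eq_zero {a b : ℝ} {x : ℝ} (hx : ¬ (0 < x ∧ x < 1)) : betaPdf a b x = 0 :=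
  if_neg hx

lemma map_betaProd (p q r : ℝ) (hp : 0 < p) (hq : 0 < q) (hr : 0 < r) :
    ((betaDist p q).prod (betaDist (p + q) r)).map mapCD
      = (betaDist r q).prod (betaDist (r + q) p) := by
  have hpq : (0:ℝ) < p + q := by linarith
  have hrq : (0:ℝ) < r + q := by linarith
  rw [betaDist_prod hp hq hpq hr, betaDist_prod hr hq hrq hp]
  set H : ℝ × ℝ → ENNReal :=
    fun z => ENNReal.ofReal (betaPdf p q z.1) * ENNReal.ofReal (betaPdf (p + q) r z.2) with hH
  set G : ℝ × ℝ → ENNReal :=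
    fun z => ENNReal.ofReal (betaPdf r q z.1) * ENNReal.ofReal (betaPdf (r + q) p z.2) with hG
  have hH0 : ∀ z ∉ betaSq, H z = 0 := by
    intro z hzS
    rw [mem_betaSq] at hzS
    rcases not_and_or.mp hzS with h | h
    · simp [hH, betaPdf_eq_zero h]
    · simp [hH, betaPdf_eq_zero h]
  have hG0 : ∀ z ∉ betaSq, G z = 0 := by
    intro z hzS
    rw [mem_betaSq] at hzS
    rcases not_and_or.mp hzS with h | h
    · simp [hG, betaPdf_eq_zero h]
    · simp [hG, betaPdf_eq_zero h]
  have restrset : ∀ (F : ℝ × ℝ → ENNReal), (∀ z ∉ betaSq, F z = 0) →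
      ∀ (T : Set (ℝ × ℝ)), MeasurableSet T →
      ∫⁻ z in T, F z = ∫⁻ z in betaSq ∩ T, F z := by
    intro F hF0 T hT
    calc ∫⁻ z in T, F z = ∫⁻ z in T, betaSq.indicator F z := by
          apply lintegral_congr
          intro z
          by_cases hz : z ∈ betaSq
          · simp [Set.indicator_of_mem hz]
          · simp [Set.indicator_of_notMem hz, hF0 z hz]
      _ = ∫⁻ z in betaSq, F z ∂(volume.restrict T) := lintegral_indicator measurableSet_betaSq _
      _ = ∫⁻ z in betaSq ∩ T, F z := by rw [Measure.restrict_restrict measurableSet_betaSq]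
  ext E hE
  have hpre : MeasurableSet (mapCD ⁻¹' E) := measurable_mapCD hE
  have hSE : MeasurableSet (betaSq ∩ mapCD ⁻¹' E) := measurableSet_betaSq.inter hpre
  rw [Measure.map_apply measurable_mapCD hE, withDensity_apply _ hpre, withDensity_apply _ hE,
    restrset H hH0 _ hpre, restrset G hG0 _ hE]
  have himg : betaSq ∩ E = mapCD '' (betaSq ∩ mapCD ⁻¹' E) := by
    ext y
    constructor
    · rintro ⟨hyS, hyE⟩
      exact ⟨mapCD y, ⟨mapCD_mem hyS, by
        simp only [Set.mem_preimage, mapCD_involution hyS]; exact hyE⟩, mapCD_involution hyS⟩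
    · rintro ⟨x, ⟨hxS, hxE⟩, rfl⟩
      exact ⟨mapCD_mem hxS, hxE⟩
  rw [himg, lintegral_image_eq_lintegral_abs_det_fderiv_mul volume hSE
    (fun x hx => (hasFDerivAt_mapCD (one_sub_mul_pos hx.1).ne').hasFDerivWithinAt)
    (injOn_mapCD.mono Set.inter_subset_left) G]
  refine setLIntegral_congr_fun hSE (fun x hx => ?_)
  exact (density_identity hp hq hr hx.1).symm

end SW

open SW in
/-- Seshadri–Wesołowski, forward direction: if `A ~ Beta(p,q)` and
`B ~ Beta(p+q,r)` are independent, then `C = (1-B)/(1-AB)` and `D = 1-AB` are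
independent with `C ~ Beta(r,q)` and `D ~ Beta(r+q,p)`. -/
theorem stmt_9 {Ω : Type*} [MeasurableSpace Ω] (μ : Measure Ω) [IsProbabilityMeasure μ]
    (A B : Ω → ℝ) (hA : Measurable A) (hB : Measurable B)
    (p q r : ℝ) (hp : 0 < p) (hq : 0 < q) (hr : 0 < r)
    (hAdist : μ.map A = betaDist p q) (hBdist : μ.map B = betaDist (p + q) r)
    (hind : IndepFun A B μ) :
    IndepFun (fun ω => (1 - B ω) / (1 - A ω * B ω)) (fun ω => 1 - A ω * B ω) μ ∧
    μ.map (fun ω => (1 - B ω) / (1 - A ω * B ω)) = betaDist r q ∧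
    μ.map (fun ω => 1 - A ω * B ω) = betaDist (r + q) p := by
  have hCmeas : Measurable fun ω => (1 - B ω) / (1 - A ω * B ω) :=
    (measurable_const.sub hB).div (measurable_const.sub (hA.mul hB))
  have hDmeas : Measurable fun ω => 1 - A ω * B ω := measurable_const.sub (hA.mul hB)
  have hpairAB : Measurable fun ω => (A ω, B ω) := hA.prodMk hB
  have hpairCD : Measurable fun ω => ((1 - B ω) / (1 - A ω * B ω), 1 - A ω * B ω) :=
    hCmeas.prodMk hDmeas
  have hABdist : μ.map (fun ω => (A ω, B ω)) = (betaDist p q).prod (betaDist (p + q) r) := by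
    rw [(indepFun_iff_map_prod_eq_prod_map_map hA.aemeasurable hB.aemeasurable).mp hind,
      hAdist, hBdist]
  have hmapCD : μ.map (fun ω => ((1 - B ω) / (1 - A ω * B ω), 1 - A ω * B ω))
      = (betaDist r q).prod (betaDist (r + q) p) := by
    have hcomp : (fun ω => ((1 - B ω) / (1 - A ω * B ω), 1 - A ω * B ω))
        = mapCD ∘ (fun ω => (A ω, B ω)) := rfl
    rw [hcomp, ← Measure.map_map measurable_mapCD hpairAB, hABdist, map_betaProd p q r hp hq hr]
  haveI h1 : IsProbabilityMeasure (betaDist r q) := isProbabilityMeasure_betaDist hr hq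
  haveI h2 : IsProbabilityMeasure (betaDist (r + q) p) :=
    isProbabilityMeasure_betaDist (by linarith) hp
  have hC : μ.map (fun ω => (1 - B ω) / (1 - A ω * B ω)) = betaDist r q := by
    have : μ.map (fun ω => (1 - B ω) / (1 - A ω * B ω))
        = (μ.map fun ω => ((1 - B ω) / (1 - A ω * B ω), 1 - A ω * B ω)).map Prod.fst := by
      rw [Measure.map_map measurable_fst hpairCD]; rfl
    rw [this, hmapCD, Measure.map_fst_prod, measure_univ, one_smul]
  have hD : μ.map (fun ω => 1 - A ω * B ω) = betaDist (r + q) p := by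
    have : μ.map (fun ω => 1 - A ω * B ω)
        = (μ.map fun ω => ((1 - B ω) / (1 - A ω * B ω), 1 - A ω * B ω)).map Prod.snd := by
      rw [Measure.map_map measurable_snd hpairCD]; rfl
    rw [this, hmapCD, Measure.map_snd_prod, measure_univ, one_smul]
  refine ⟨?_, hC, hD⟩
  rw [indepFun_iff_map_prod_eq_prod_map_map hCmeas.aemeasurable hDmeas.aemeasurable,
    hmapCD, hC, hD]
end

section
/- Let R¹, R², Y be independent random variables with R¹ ~ Beta(μ+λ, β), R² ~ InverseBeta(λ, μ), Y ~ Beta(μ, β), where λ, μ, β > 0. Then (Y + (1-Y)·R¹/R², Y·R²/R¹ + (1-Y)) has the same distribution as (R¹, R²). (Invariance of the beta model under T^{h,Y} with h(y) = 1-y.) -/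
open MeasureTheory ProbabilityTheory

namespace Stmt12

open Set Real
open scoped ENNReal

/-- real beta pdf -/
noncomputable def bpdf (a c : ℝ) (x : ℝ) : ℝ :=
  if 0 < x ∧ x < 1 then
    (Real.Gamma (a + c) / (Real.Gamma a * Real.Gamma c)) * x ^ (a - 1) * (1 - x) ^ (c - 1)
  else 0

lemma betaDist_eq (a c : ℝ) :
    betaDist a c = volume.withDensity fun x => ENNReal.ofReal (bpdf a c x) := rfl

lemma bpdf_meas (a c : ℝ) : Measurable (bpdf a c) := by
  unfold bpdf
  have hs : MeasurableSet {x : ℝ | 0 < x ∧ x < 1} := by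
    simpa [Set.Ioo] using (measurableSet_Ioo : MeasurableSet (Ioo (0:ℝ) 1))
  exact Measurable.ite hs
    ((measurable_const.mul (measurable_id.pow measurable_const)).mul
      ((measurable_const.sub measurable_id).pow measurable_const)) measurable_const

lemma bpdf_nonneg {a c : ℝ} (ha : 0 < a) (hc : 0 < c) (x : ℝ) : 0 ≤ bpdf a c x := by
  unfold bpdf
  split_ifs with h
  · have h1 := Real.Gamma_pos_of_pos ha
    have h2 := Real.Gamma_pos_of_pos hc
    have h3 := Real.Gamma_pos_of_pos (by linarith : (0:ℝ) < a + c)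
    have := Real.rpow_nonneg h.1.le (a - 1)
    have := Real.rpow_nonneg (by linarith [h.2] : (0:ℝ) ≤ 1 - x) (c - 1)
    positivity
  · exact le_refl 0

noncomputable def K (l m b : ℝ) : ℝ :=
  Real.Gamma (m + l + b) / (Real.Gamma l * Real.Gamma m * Real.Gamma b)

noncomputable def g (l m b : ℝ) (p : ℝ × ℝ) : ℝ :=
  if 0 < p.2 ∧ p.2 < p.1 ∧ p.1 < 1 then
    K l m b * p.2 ^ (l - 1) * (p.1 - p.2) ^ (m - 1) * (1 - p.1) ^ (b - 1)
  else 0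

lemma g_meas (l m b : ℝ) : Measurable (g l m b) := by
  unfold g
  have hs : MeasurableSet {p : ℝ × ℝ | 0 < p.2 ∧ p.2 < p.1 ∧ p.1 < 1} := by
    refine MeasurableSet.inter ?_ (MeasurableSet.inter ?_ ?_)
    · exact measurableSet_lt measurable_const measurable_snd
    · exact measurableSet_lt measurable_snd measurable_fst
    · exact measurableSet_lt measurable_fst measurable_const
  exact Measurable.ite hs
    (((measurable_const.mul (measurable_snd.pow measurable_const)).mul
      ((measurable_fst.sub measurable_snd).pow measurable_const)).mul
      ((measurable_const.sub measurable_fst).pow measurable_const)) measurable_const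

noncomputable def D (l m b : ℝ) : Measure (ℝ × ℝ) :=
  (volume.prod volume).withDensity fun p => ENNReal.ofReal (g l m b p)


lemma lintegral_translate (F : ℝ → ℝ≥0∞) (hF : Measurable F) (d : ℝ) :
    ∫⁻ y, F (d + y) = ∫⁻ s, F s := by
  exact (measurePreserving_add_left volume d).lintegral_comp hF

lemma lintegral_scale (F : ℝ → ℝ≥0∞) (hF : Measurable F) {c : ℝ} (hc : 0 < c) (d : ℝ) :
    ∫⁻ y, F (d + c * y) = ENNReal.ofReal c⁻¹ * ∫⁻ s, F s := by
  have h1 : ∫⁻ y, F (d + c * y) = ∫⁻ s, F (d + s) ∂(Measure.map (fun y => c * y) volume) := by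
    exact (lintegral_map (g := fun y => c * y) (f := fun s => F (d + s))
      (hF.comp (measurable_const_add d)) (measurable_const_mul c)).symm
  rw [h1, Real.map_volume_mul_left hc.ne', lintegral_smul_measure, smul_eq_mul,
    lintegral_translate F hF d, abs_of_pos (inv_pos.mpr hc)]

lemma lintegral_scale' (F : ℝ → ℝ≥0∞) (hF : Measurable F) {c : ℝ} (hc : 0 < c) (d : ℝ) :
    ∫⁻ s, F s = ENNReal.ofReal c * ∫⁻ y, F (d + c * y) := by
  rw [lintegral_scale F hF hc d, ← mul_assoc, ← ENNReal.ofReal_mul hc.le,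
    mul_inv_cancel₀ hc.ne', ENNReal.ofReal_one, one_mul]

lemma beta_int {m b : ℝ} (hm : 0 < m) (hb : 0 < b) :
    ∫⁻ t, ENNReal.ofReal (if 0 < t ∧ t < 1 then t ^ (m - 1) * (1 - t) ^ (b - 1) else 0)
      = ENNReal.ofReal (Real.Gamma m * Real.Gamma b / Real.Gamma (m + b)) := by
  have hmc : (0:ℝ) < (m:ℂ).re := by simpa using hm
  have hbc : (0:ℝ) < (b:ℂ).re := by simpa using hb
  -- the complex beta integral equals the real one
  have hBc : Complex.betaIntegral (m:ℂ) (b:ℂ)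
      = ((∫ t in (0:ℝ)..1, t ^ (m - 1) * (1 - t) ^ (b - 1) : ℝ) : ℂ) := by
    rw [Complex.betaIntegral, ← intervalIntegral.integral_ofReal]
    refine intervalIntegral.integral_congr fun x hx => ?_
    rw [Set.uIcc_of_le zero_le_one] at hx
    have hx0 : (0:ℝ) ≤ x := hx.1
    have hx1 : (0:ℝ) ≤ 1 - x := by linarith [hx.2]
    have e1 : ((x:ℂ)) ^ ((m:ℂ) - 1) = ((x ^ (m - 1) : ℝ) : ℂ) := by
      rw [Complex.ofReal_cpow hx0]; norm_cast
    have e2 : ((1:ℂ) - (x:ℂ)) ^ ((b:ℂ) - 1) = (((1 - x) ^ (b - 1) : ℝ) : ℂ) := by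
      rw [Complex.ofReal_cpow hx1]; push_cast; norm_num
    rw [Complex.ofReal_mul, ← e1, ← e2]
  have hG := Complex.Gamma_mul_Gamma_eq_betaIntegral hmc hbc
  rw [hBc] at hG
  have hGr : Real.Gamma m * Real.Gamma b
      = Real.Gamma (m + b) * ∫ t in (0:ℝ)..1, t ^ (m - 1) * (1 - t) ^ (b - 1) := by
    have := hG
    rw [show ((m:ℂ) + b) = ((m + b : ℝ) : ℂ) by push_cast; ring] at this
    rw [Complex.Gamma_ofReal, Complex.Gamma_ofReal, Complex.Gamma_ofReal] at this
    exact_mod_cast this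
  have hΓ : Real.Gamma (m + b) ≠ 0 := (Real.Gamma_pos_of_pos (by linarith)).ne'
  have hval : ∫ t in Set.Ioo (0:ℝ) 1, t ^ (m - 1) * (1 - t) ^ (b - 1)
      = Real.Gamma m * Real.Gamma b / Real.Gamma (m + b) := by
    rw [← MeasureTheory.integral_Ioc_eq_integral_Ioo,
      ← intervalIntegral.integral_of_le zero_le_one]
    field_simp
    linarith [hGr]
  -- integrability
  have hci := (Complex.betaIntegral_convergent hmc hbc).1
  have hnorm : IntegrableOn
      (fun x : ℝ => ‖(x:ℂ) ^ ((m:ℂ) - 1) * (1 - (x:ℂ)) ^ ((b:ℂ) - 1)‖) (Set.Ioc 0 1) volume :=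
    hci.norm
  have hint : IntegrableOn (fun t : ℝ => t ^ (m - 1) * (1 - t) ^ (b - 1))
      (Set.Ioo (0:ℝ) 1) volume := by
    refine IntegrableOn.congr_fun (hnorm.mono_set Set.Ioo_subset_Ioc_self) ?_ measurableSet_Ioo
    intro x hx
    have hx0 : 0 < x := hx.1
    have hx1 : 0 < 1 - x := by simp only [Set.mem_Ioo] at hx; linarith [hx.2]
    simp only [norm_mul]
    rw [Complex.norm_cpow_eq_rpow_re_of_pos hx0,
      show (1 - (x:ℂ)) = (((1 - x : ℝ)):ℂ) by push_cast; ring,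
      Complex.norm_cpow_eq_rpow_re_of_pos hx1]
    norm_num
  -- convert lintegral to integral
  have hind : ∀ t : ℝ, ENNReal.ofReal
        (if 0 < t ∧ t < 1 then t ^ (m - 1) * (1 - t) ^ (b - 1) else 0)
      = (Set.Ioo (0:ℝ) 1).indicator
        (fun t => ENNReal.ofReal (t ^ (m - 1) * (1 - t) ^ (b - 1))) t := by
    intro t
    by_cases h : 0 < t ∧ t < 1
    · rw [if_pos h, Set.indicator_of_mem (Set.mem_Ioo.mpr h)]
    · rw [if_neg h, Set.indicator_of_notMem (by simpa [Set.mem_Ioo] using h), ENNReal.ofReal_zero]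
  rw [lintegral_congr hind, lintegral_indicator measurableSet_Ioo,
    ← ofReal_integral_eq_lintegral_ofReal hint ?_, hval]
  · filter_upwards [ae_restrict_mem measurableSet_Ioo] with t ht
    have h1 : (0:ℝ) ≤ t := ht.1.le
    have h2 : (0:ℝ) ≤ 1 - t := by simp only [Set.mem_Ioo] at ht; linarith [ht.2]
    exact mul_nonneg (Real.rpow_nonneg h1 _) (Real.rpow_nonneg h2 _)


lemma measSet01 : MeasurableSet {x : ℝ | 0 < x ∧ x < 1} := by
  simpa [Set.Ioo] using (measurableSet_Ioo : MeasurableSet (Ioo (0:ℝ) 1))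

lemma aux_meas (a c : ℝ) : Measurable fun x : ℝ =>
    ENNReal.ofReal (if 0 < x ∧ x < 1 then x ^ (a - 1) * (1 - x) ^ (c - 1) else 0) :=
  ENNReal.measurable_ofReal.comp (Measurable.ite measSet01
    ((measurable_id.pow measurable_const).mul
      ((measurable_const.sub measurable_id).pow measurable_const)) measurable_const)

lemma betaDist_isProb {a c : ℝ} (ha : 0 < a) (hc : 0 < c) :
    IsProbabilityMeasure (betaDist a c) := by
  constructor
  have hC : (0:ℝ) ≤ Real.Gamma (a + c) / (Real.Gamma a * Real.Gamma c) :=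
    (div_pos (Real.Gamma_pos_of_pos (by linarith))
      (mul_pos (Real.Gamma_pos_of_pos ha) (Real.Gamma_pos_of_pos hc))).le
  rw [betaDist_eq, withDensity_apply _ MeasurableSet.univ, Measure.restrict_univ]
  have h : ∀ x : ℝ, ENNReal.ofReal (bpdf a c x)
      = ENNReal.ofReal (Real.Gamma (a + c) / (Real.Gamma a * Real.Gamma c)) *
        ENNReal.ofReal (if 0 < x ∧ x < 1 then x ^ (a - 1) * (1 - x) ^ (c - 1) else 0) := by
    intro x
    rw [← ENNReal.ofReal_mul hC]
    congr 1
    unfold bpdf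
    split_ifs with hcase
    · ring
    · ring
  rw [lintegral_congr h, lintegral_const_mul _ (aux_meas a c), beta_int ha hc,
    ← ENNReal.ofReal_mul hC]
  rw [show Real.Gamma (a + c) / (Real.Gamma a * Real.Gamma c) *
      (Real.Gamma a * Real.Gamma c / Real.Gamma (a + c)) = 1 by
    field_simp]
  exact ENNReal.ofReal_one

lemma gzero_x {l m b x u : ℝ} (hx : ¬(0 < x ∧ x < 1)) : g l m b (x, u) = 0 := by
  unfold g; rw [if_neg]; rintro ⟨h1, h2, h3⟩; exact hx ⟨lt_trans h1 h2, h3⟩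

lemma gzero_u {l m b s u : ℝ} (hu : ¬(0 < u ∧ u < 1)) : g l m b (s, u) = 0 := by
  unfold g; rw [if_neg]; rintro ⟨h1, h2, h3⟩; exact hu ⟨h1, lt_trans h2 h3⟩

lemma g_nonneg {l m b : ℝ} (hl : 0 < l) (hm : 0 < m) (hb : 0 < b) (p : ℝ × ℝ) :
    0 ≤ g l m b p := by
  unfold g K
  split_ifs with h
  · obtain ⟨h1, h2, h3⟩ := h
    have := Real.Gamma_pos_of_pos hl
    have := Real.Gamma_pos_of_pos hm
    have := Real.Gamma_pos_of_pos hb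
    have := Real.Gamma_pos_of_pos (show (0:ℝ) < m + l + b by linarith)
    have := Real.rpow_nonneg h1.le (l - 1)
    have := Real.rpow_nonneg (show (0:ℝ) ≤ p.1 - p.2 by linarith) (m - 1)
    have := Real.rpow_nonneg (show (0:ℝ) ≤ 1 - p.1 by linarith) (b - 1)
    positivity
  · exact le_refl 0

lemma dens1 {l m b : ℝ} (hl : 0 < l) (hm : 0 < m) (hb : 0 < b) {x : ℝ}
    (hx0 : 0 < x) (hx1 : x < 1) (u : ℝ) :
    ENNReal.ofReal (bpdf (m + l) b x) *
      (ENNReal.ofReal x⁻¹ * ENNReal.ofReal (bpdf l m (u / x)))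
    = ENNReal.ofReal (g l m b (x, u)) := by
  by_cases hu : 0 < u ∧ u < x
  · obtain ⟨hu0, hux⟩ := hu
    have key : bpdf (m + l) b x * (x⁻¹ * bpdf l m (u / x)) = g l m b (x, u) := by
      unfold bpdf g K
      rw [if_pos (⟨hx0, hx1⟩ : 0 < x ∧ x < 1),
        if_pos (⟨div_pos hu0 hx0, (div_lt_one hx0).mpr hux⟩ : 0 < u / x ∧ u / x < 1),
        if_pos (⟨hu0, hux, hx1⟩ : 0 < u ∧ u < x ∧ x < 1)]
      have hG1 : Real.Gamma (l + m) = Real.Gamma (m + l) := by rw [add_comm]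
      have e1 : (u / x) ^ (l - 1) = u ^ (l - 1) / x ^ (l - 1) := Real.div_rpow hu0.le hx0.le _
      have e2 : (1 : ℝ) - u / x = (x - u) / x := by field_simp
      have e3 : ((x - u) / x) ^ (m - 1) = (x - u) ^ (m - 1) / x ^ (m - 1) :=
        Real.div_rpow (by linarith) hx0.le _
      have e4 : x ^ (m + l - 1) = x ^ (l - 1) * x ^ (m - 1) * x := by
        rw [show m + l - 1 = (l - 1) + ((m - 1) + 1) by ring, Real.rpow_add hx0,
          Real.rpow_add hx0, Real.rpow_one, mul_assoc]
      have n1 : Real.Gamma (m + l) ≠ 0 := (Real.Gamma_pos_of_pos (by linarith)).ne'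
      have n2 : Real.Gamma l ≠ 0 := (Real.Gamma_pos_of_pos hl).ne'
      have n3 : Real.Gamma m ≠ 0 := (Real.Gamma_pos_of_pos hm).ne'
      have n4 : Real.Gamma b ≠ 0 := (Real.Gamma_pos_of_pos hb).ne'
      have n5 : x ^ (l - 1) ≠ 0 := (Real.rpow_pos_of_pos hx0 _).ne'
      have n6 : x ^ (m - 1) ≠ 0 := (Real.rpow_pos_of_pos hx0 _).ne'
      rw [e1, e2, e3, e4, hG1]
      field_simp
    have hml : (0:ℝ) < m + l := by linarith
    rw [← ENNReal.ofReal_mul (inv_nonneg.mpr hx0.le),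
      ← ENNReal.ofReal_mul (bpdf_nonneg hml hb x)]
    exact congrArg ENNReal.ofReal key
  · have h2 : bpdf l m (u / x) = 0 := by
      unfold bpdf; rw [if_neg]
      rintro ⟨ha2, hb2⟩
      have hu0 : 0 < u := by
        have := mul_pos ha2 hx0
        rwa [div_mul_cancel₀ u hx0.ne'] at this
      exact hu ⟨hu0, (div_lt_one hx0).mp hb2⟩
    have h3 : g l m b (x, u) = 0 := by
      unfold g; rw [if_neg]; rintro ⟨ha3, hb3, _⟩; exact hu ⟨ha3, hb3⟩
    rw [h2, h3, ENNReal.ofReal_zero, mul_zero, mul_zero]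

noncomputable def q (l m b u : ℝ) : ℝ :=
  K l m b * u ^ (l - 1) * (1 - u) ^ (m + b - 1) *
    (Real.Gamma m * Real.Gamma b / Real.Gamma (m + b))

lemma dens2 {l m b : ℝ} (hl : 0 < l) (hm : 0 < m) (hb : 0 < b) {u : ℝ}
    (hu0 : 0 < u) (hu1 : u < 1) (s : ℝ) :
    ENNReal.ofReal (q l m b u) *
      (ENNReal.ofReal (1 - u)⁻¹ * ENNReal.ofReal (bpdf m b ((s - u) / (1 - u))))
    = ENNReal.ofReal (g l m b (s, u)) := by
  have h1u : (0:ℝ) < 1 - u := by linarith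
  have hiff : (0 < (s - u) / (1 - u) ∧ (s - u) / (1 - u) < 1) ↔ (u < s ∧ s < 1) := by
    rw [div_lt_one h1u]
    constructor
    · rintro ⟨ha, hb2⟩
      have : 0 < s - u := by
        have := mul_pos ha h1u
        rwa [div_mul_cancel₀ _ h1u.ne'] at this
      constructor <;> linarith
    · rintro ⟨ha, hb2⟩
      exact ⟨div_pos (by linarith) h1u, by linarith⟩
  by_cases hs : u < s ∧ s < 1
  · obtain ⟨hus, hs1⟩ := hs
    have key : q l m b u * ((1 - u)⁻¹ * bpdf m b ((s - u) / (1 - u))) = g l m b (s, u) := by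
      unfold bpdf g q K
      rw [if_pos (hiff.mpr ⟨hus, hs1⟩), if_pos (⟨hu0, hus, hs1⟩ : 0 < u ∧ u < s ∧ s < 1)]
      have e1 : ((s - u) / (1 - u)) ^ (m - 1) = (s - u) ^ (m - 1) / (1 - u) ^ (m - 1) :=
        Real.div_rpow (by linarith) h1u.le _
      have e2 : (1 : ℝ) - (s - u) / (1 - u) = (1 - s) / (1 - u) := by field_simp; ring
      have e3 : ((1 - s) / (1 - u)) ^ (b - 1) = (1 - s) ^ (b - 1) / (1 - u) ^ (b - 1) :=
        Real.div_rpow (by linarith) h1u.le _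
      have e4 : (1 - u) ^ (m + b - 1) = (1 - u) ^ (m - 1) * (1 - u) ^ (b - 1) * (1 - u) := by
        rw [show m + b - 1 = (m - 1) + ((b - 1) + 1) by ring, Real.rpow_add h1u,
          Real.rpow_add h1u, Real.rpow_one, mul_assoc]
      have n1 : Real.Gamma (m + b) ≠ 0 := (Real.Gamma_pos_of_pos (by linarith)).ne'
      have n2 : Real.Gamma l ≠ 0 := (Real.Gamma_pos_of_pos hl).ne'
      have n3 : Real.Gamma m ≠ 0 := (Real.Gamma_pos_of_pos hm).ne'
      have n4 : Real.Gamma b ≠ 0 := (Real.Gamma_pos_of_pos hb).ne'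
      have n5 : (1 - u) ^ (m - 1) ≠ 0 := (Real.rpow_pos_of_pos h1u _).ne'
      have n6 : (1 - u) ^ (b - 1) ≠ 0 := (Real.rpow_pos_of_pos h1u _).ne'
      rw [e1, e2, e3, e4]
      field_simp
    have hqn : 0 ≤ q l m b u := by
      unfold q K
      have := Real.Gamma_pos_of_pos hl
      have := Real.Gamma_pos_of_pos hm
      have := Real.Gamma_pos_of_pos hb
      have := Real.Gamma_pos_of_pos (show (0:ℝ) < m + l + b by linarith)
      have := Real.Gamma_pos_of_pos (show (0:ℝ) < m + b by linarith)
      have := Real.rpow_nonneg hu0.le (l - 1)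
      have := Real.rpow_nonneg h1u.le (m + b - 1)
      positivity
    rw [← ENNReal.ofReal_mul (inv_nonneg.mpr h1u.le), ← ENNReal.ofReal_mul hqn]
    exact congrArg ENNReal.ofReal key
  · have h2 : bpdf m b ((s - u) / (1 - u)) = 0 := by
      unfold bpdf; rw [if_neg]
      intro hcon
      exact hs (hiff.mp hcon)
    have h3 : g l m b (s, u) = 0 := by
      unfold g; rw [if_neg]; rintro ⟨_, hb3, hc3⟩; exact hs ⟨hb3, hc3⟩
    rw [h2, h3, ENNReal.ofReal_zero, mul_zero, mul_zero]

lemma g_affine {l m b : ℝ} (hl : 0 < l) (hm : 0 < m) (hb : 0 < b) {u : ℝ}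
    (hu0 : 0 < u) (hu1 : u < 1) (t : ℝ) :
    ENNReal.ofReal (g l m b (u + (1 - u) * t, u))
      = ENNReal.ofReal (K l m b * u ^ (l - 1) * (1 - u) ^ (m + b - 2)) *
        ENNReal.ofReal (if 0 < t ∧ t < 1 then t ^ (m - 1) * (1 - t) ^ (b - 1) else 0) := by
  have h1u : (0:ℝ) < 1 - u := by linarith
  have hKn : 0 ≤ K l m b * u ^ (l - 1) * (1 - u) ^ (m + b - 2) := by
    unfold K
    have := Real.Gamma_pos_of_pos hl
    have := Real.Gamma_pos_of_pos hm
    have := Real.Gamma_pos_of_pos hb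
    have := Real.Gamma_pos_of_pos (show (0:ℝ) < m + l + b by linarith)
    have := Real.rpow_nonneg hu0.le (l - 1)
    have := Real.rpow_nonneg h1u.le (m + b - 2)
    positivity
  rw [← ENNReal.ofReal_mul hKn]
  congr 1
  have hcond : (0 < u ∧ u < u + (1 - u) * t ∧ u + (1 - u) * t < 1) ↔ (0 < t ∧ t < 1) := by
    constructor
    · rintro ⟨_, h2, h3⟩
      constructor
      · nlinarith
      · nlinarith
    · rintro ⟨h2, h3⟩
      refine ⟨hu0, by nlinarith, by nlinarith⟩
  by_cases ht : 0 < t ∧ t < 1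
  · unfold g
    rw [if_pos ?_, if_pos ht]
    · have e1 : u + (1 - u) * t - u = (1 - u) * t := by ring
      have e2 : (1:ℝ) - (u + (1 - u) * t) = (1 - u) * (1 - t) := by ring
      rw [e1, e2, Real.mul_rpow h1u.le ht.1.le, Real.mul_rpow h1u.le (by linarith [ht.2]),
        show m + b - 2 = (m - 1) + (b - 1) by ring, Real.rpow_add h1u]
      ring
    · exact hcond.mpr ht
  · rw [if_neg ht, mul_zero]
    unfold g
    rw [if_neg]
    intro hcon
    exact ht (hcond.mp hcon)

lemma q_eq {l m b : ℝ} (hl : 0 < l) (hm : 0 < m) (hb : 0 < b) {u : ℝ}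
    (hu0 : 0 < u) (hu1 : u < 1) :
    ENNReal.ofReal (1 - u) * (ENNReal.ofReal (K l m b * u ^ (l - 1) * (1 - u) ^ (m + b - 2)) *
      ENNReal.ofReal (Real.Gamma m * Real.Gamma b / Real.Gamma (m + b)))
    = ENNReal.ofReal (q l m b u) := by
  have h1u : (0:ℝ) < 1 - u := by linarith
  have hKn : 0 ≤ K l m b * u ^ (l - 1) * (1 - u) ^ (m + b - 2) := by
    unfold K
    have := Real.Gamma_pos_of_pos hl
    have := Real.Gamma_pos_of_pos hm
    have := Real.Gamma_pos_of_pos hb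
    have := Real.Gamma_pos_of_pos (show (0:ℝ) < m + l + b by linarith)
    have := Real.rpow_nonneg hu0.le (l - 1)
    have := Real.rpow_nonneg h1u.le (m + b - 2)
    positivity
  rw [← ENNReal.ofReal_mul hKn, ← ENNReal.ofReal_mul h1u.le]
  refine congrArg ENNReal.ofReal ?_
  have e : (1 - u) ^ (m + b - 1) = (1 - u) ^ (m + b - 2) * (1 - u) := by
    rw [show m + b - 1 = (m + b - 2) + 1 by ring, Real.rpow_add h1u, Real.rpow_one]
  unfold q
  rw [e]
  ring


lemma key_x {l m b : ℝ} (hl : 0 < l) (hm : 0 < m) (hb : 0 < b) (x : ℝ)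
    (Φ : ℝ → ℝ≥0∞) (hΦ : Measurable Φ) :
    ENNReal.ofReal (bpdf (m + l) b x) * ∫⁻ w, ENNReal.ofReal (bpdf l m w) * Φ (x * w)
      = ∫⁻ u, ENNReal.ofReal (g l m b (x, u)) * Φ u := by
  by_cases hx : 0 < x ∧ x < 1
  · obtain ⟨hx0, hx1⟩ := hx
    have hGm : Measurable fun u : ℝ => ENNReal.ofReal (bpdf l m (u / x)) * Φ u :=
      ((ENNReal.measurable_ofReal.comp ((bpdf_meas l m).comp (measurable_id.div_const x)))).mul hΦ
    have h1 : ∀ w : ℝ, ENNReal.ofReal (bpdf l m w) * Φ (x * w)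
        = (fun u : ℝ => ENNReal.ofReal (bpdf l m (u / x)) * Φ u) (0 + x * w) := by
      intro w
      simp only [zero_add]
      rw [mul_div_cancel_left₀ w hx0.ne']
    rw [lintegral_congr h1, lintegral_scale _ hGm hx0 0, ← mul_assoc,
      ← lintegral_const_mul _ hGm]
    refine lintegral_congr fun u => ?_
    rw [show ENNReal.ofReal (bpdf (m + l) b x) * ENNReal.ofReal x⁻¹ *
        (ENNReal.ofReal (bpdf l m (u / x)) * Φ u)
      = ENNReal.ofReal (bpdf (m + l) b x) *
          (ENNReal.ofReal x⁻¹ * ENNReal.ofReal (bpdf l m (u / x))) * Φ u by ring,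
      dens1 hl hm hb hx0 hx1 u]
  · have h0 : bpdf (m + l) b x = 0 := by unfold bpdf; rw [if_neg hx]
    rw [h0, ENNReal.ofReal_zero, zero_mul]
    symm
    calc ∫⁻ u, ENNReal.ofReal (g l m b (x, u)) * Φ u
        = ∫⁻ _ : ℝ, 0 := lintegral_congr fun u => by
          rw [gzero_x hx, ENNReal.ofReal_zero, zero_mul]
      _ = 0 := lintegral_zero

lemma key_u {l m b : ℝ} (hl : 0 < l) (hm : 0 < m) (hb : 0 < b) (u : ℝ)
    (Ψ : ℝ × ℝ → ℝ≥0∞) (hΨ : Measurable Ψ) :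
    (∫⁻ x, ENNReal.ofReal (g l m b (x, u))) *
        ∫⁻ y, ENNReal.ofReal (bpdf m b y) * Ψ (y + (1 - y) * u, u)
      = ∫⁻ s, ENNReal.ofReal (g l m b (s, u)) * Ψ (s, u) := by
  by_cases hu : 0 < u ∧ u < 1
  · obtain ⟨hu0, hu1⟩ := hu
    have h1u : (0:ℝ) < 1 - u := by linarith
    have hFm : Measurable fun x : ℝ => ENNReal.ofReal (g l m b (x, u)) :=
      ENNReal.measurable_ofReal.comp ((g_meas l m b).comp (measurable_id.prodMk measurable_const))
    have hA : (∫⁻ x, ENNReal.ofReal (g l m b (x, u))) = ENNReal.ofReal (q l m b u) := by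
      rw [lintegral_scale' _ hFm h1u u,
        lintegral_congr (fun t => g_affine hl hm hb hu0 hu1 t),
        lintegral_const_mul _ (aux_meas m b), beta_int hm hb, q_eq hl hm hb hu0 hu1]
    have hGm : Measurable fun s : ℝ =>
        ENNReal.ofReal (bpdf m b ((s - u) / (1 - u))) * Ψ (s, u) :=
      (ENNReal.measurable_ofReal.comp ((bpdf_meas m b).comp
        ((measurable_id.sub_const u).div_const (1 - u)))).mul
        (hΨ.comp (measurable_id.prodMk measurable_const))
    have h1 : ∀ y : ℝ, ENNReal.ofReal (bpdf m b y) * Ψ (y + (1 - y) * u, u)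
        = (fun s : ℝ => ENNReal.ofReal (bpdf m b ((s - u) / (1 - u))) * Ψ (s, u))
            (u + (1 - u) * y) := by
      intro y
      simp only []
      have e : (u + (1 - u) * y - u) / (1 - u) = y := by
        rw [show u + (1 - u) * y - u = (1 - u) * y by ring, mul_div_cancel_left₀ y h1u.ne']
      have e2 : y + (1 - y) * u = u + (1 - u) * y := by ring
      rw [e, e2]
    rw [lintegral_congr h1, lintegral_scale _ hGm h1u u, hA, ← mul_assoc,
      ← lintegral_const_mul _ hGm]
    refine lintegral_congr fun s => ?_
    rw [show ENNReal.ofReal (q l m b u) * ENNReal.ofReal (1 - u)⁻¹ *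
        (ENNReal.ofReal (bpdf m b ((s - u) / (1 - u))) * Ψ (s, u))
      = ENNReal.ofReal (q l m b u) * (ENNReal.ofReal (1 - u)⁻¹ *
          ENNReal.ofReal (bpdf m b ((s - u) / (1 - u)))) * Ψ (s, u) by ring,
      dens2 hl hm hb hu0 hu1 s]
  · have hz : ∀ v : ℝ, ENNReal.ofReal (g l m b (v, u)) = 0 := fun v => by
      rw [gzero_u hu, ENNReal.ofReal_zero]
    calc (∫⁻ x, ENNReal.ofReal (g l m b (x, u))) *
        ∫⁻ y, ENNReal.ofReal (bpdf m b y) * Ψ (y + (1 - y) * u, u)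
        = (∫⁻ _ : ℝ, 0) * ∫⁻ y, ENNReal.ofReal (bpdf m b y) * Ψ (y + (1 - y) * u, u) := by
          rw [lintegral_congr hz]
      _ = 0 := by rw [lintegral_zero, zero_mul]
      _ = ∫⁻ _ : ℝ, 0 := lintegral_zero.symm
      _ = ∫⁻ s, ENNReal.ofReal (g l m b (s, u)) * Ψ (s, u) :=
          lintegral_congr fun s => by rw [hz s, zero_mul]

lemma indicator_comp {α β : Type*} (T : α → β) (S : Set β) (p : α) :
    (T ⁻¹' S).indicator (fun _ => (1:ℝ≥0∞)) p = S.indicator (fun _ => (1:ℝ≥0∞)) (T p) := by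
  by_cases h : T p ∈ S
  · rw [Set.indicator_of_mem (show p ∈ T ⁻¹' S from h), Set.indicator_of_mem h]
  · rw [Set.indicator_of_notMem (show p ∉ T ⁻¹' S from h), Set.indicator_of_notMem h]

lemma M1 {l m b : ℝ} (hl : 0 < l) (hm : 0 < m) (hb : 0 < b) :
    ((betaDist (m + l) b).prod (betaDist l m)).map (fun p : ℝ × ℝ => (p.1, p.1 * p.2))
      = D l m b := by
  have hml : (0:ℝ) < m + l := by linarith
  haveI h1 := betaDist_isProb hml hb
  haveI h2 := betaDist_isProb hl hm
  have hT : Measurable fun p : ℝ × ℝ => (p.1, p.1 * p.2) :=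
    measurable_fst.prodMk (measurable_fst.mul measurable_snd)
  have hf1 : Measurable fun x : ℝ => ENNReal.ofReal (bpdf (m + l) b x) :=
    ENNReal.measurable_ofReal.comp (bpdf_meas _ _)
  have hf2 : Measurable fun w : ℝ => ENNReal.ofReal (bpdf l m w) :=
    ENNReal.measurable_ofReal.comp (bpdf_meas _ _)
  have hgm : Measurable fun p : ℝ × ℝ => ENNReal.ofReal (g l m b p) :=
    ENNReal.measurable_ofReal.comp (g_meas l m b)
  ext S hS
  have hIm : Measurable (S.indicator (fun _ => (1:ℝ≥0∞))) := measurable_const.indicator hS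
  have hIT : Measurable fun p : ℝ × ℝ => S.indicator (fun _ => (1:ℝ≥0∞)) (p.1, p.1 * p.2) :=
    hIm.comp hT
  have hInner1 : Measurable fun p : ℝ × ℝ =>
      ENNReal.ofReal (bpdf l m p.2) * S.indicator (fun _ => (1:ℝ≥0∞)) (p.1, p.1 * p.2) :=
    (hf2.comp measurable_snd).mul hIT
  calc ((betaDist (m + l) b).prod (betaDist l m)).map (fun p : ℝ × ℝ => (p.1, p.1 * p.2)) S
      = ((betaDist (m + l) b).prod (betaDist l m)) ((fun p : ℝ × ℝ => (p.1, p.1 * p.2)) ⁻¹' S) :=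
        Measure.map_apply hT hS
    _ = ∫⁻ p, ((fun p : ℝ × ℝ => (p.1, p.1 * p.2)) ⁻¹' S).indicator (fun _ => 1) p
          ∂((betaDist (m + l) b).prod (betaDist l m)) := (lintegral_indicator_one (hT hS)).symm
    _ = ∫⁻ p : ℝ × ℝ, S.indicator (fun _ => 1) (p.1, p.1 * p.2)
          ∂((betaDist (m + l) b).prod (betaDist l m)) :=
        lintegral_congr fun p => indicator_comp (fun p : ℝ × ℝ => (p.1, p.1 * p.2)) S p
    _ = ∫⁻ x, ∫⁻ w, S.indicator (fun _ => 1) (x, x * w) ∂(betaDist l m) ∂(betaDist (m + l) b) :=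
        lintegral_prod _ hIT.aemeasurable
    _ = ∫⁻ x, (∫⁻ w, ENNReal.ofReal (bpdf l m w) * S.indicator (fun _ => 1) (x, x * w))
          ∂(betaDist (m + l) b) := by
        refine lintegral_congr fun x => ?_
        rw [betaDist_eq l m]
        exact lintegral_withDensity_eq_lintegral_mul volume
          (ENNReal.measurable_ofReal.comp (bpdf_meas l m))
          (hIm.comp (measurable_const.prodMk (measurable_const.mul measurable_id)))
    _ = ∫⁻ x, ENNReal.ofReal (bpdf (m + l) b x) *
          ∫⁻ w, ENNReal.ofReal (bpdf l m w) * S.indicator (fun _ => 1) (x, x * w) := by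
        rw [betaDist_eq (m + l) b]
        exact lintegral_withDensity_eq_lintegral_mul volume hf1
          (Measurable.lintegral_prod_right' hInner1)
    _ = ∫⁻ x, ∫⁻ u, ENNReal.ofReal (g l m b (x, u)) * S.indicator (fun _ => 1) (x, u) :=
        lintegral_congr fun x => key_x hl hm hb x (fun u => S.indicator (fun _ => 1) (x, u))
          (hIm.comp (measurable_const.prodMk measurable_id))
    _ = ∫⁻ p : ℝ × ℝ, ENNReal.ofReal (g l m b p) * S.indicator (fun _ => 1) p
          ∂(volume.prod volume) := (lintegral_prod _ ((hgm.mul hIm).aemeasurable)).symm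
    _ = ∫⁻ p : ℝ × ℝ, S.indicator (fun p => ENNReal.ofReal (g l m b p)) p
          ∂(volume.prod volume) := by
        refine lintegral_congr fun p => ?_
        by_cases h : p ∈ S
        · rw [Set.indicator_of_mem h, Set.indicator_of_mem h, mul_one]
        · rw [Set.indicator_of_notMem h, Set.indicator_of_notMem h, mul_zero]
    _ = ∫⁻ p in S, ENNReal.ofReal (g l m b p) ∂(volume.prod volume) :=
        lintegral_indicator hS _
    _ = D l m b S := (withDensity_apply _ hS).symm



lemma M2 {l m b : ℝ} (hl : 0 < l) (hm : 0 < m) (hb : 0 < b) :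
    ((((betaDist (m + l) b).prod (betaDist l m)).map (fun p : ℝ × ℝ => p.1 * p.2)).prod
        (betaDist m b)).map (fun r : ℝ × ℝ => (r.2 + (1 - r.2) * r.1, r.1)) = D l m b := by
  have hml : (0:ℝ) < m + l := by linarith
  haveI h1 := betaDist_isProb hml hb
  haveI h2 := betaDist_isProb hl hm
  haveI h3 := betaDist_isProb hm hb
  have hmul : Measurable fun p : ℝ × ℝ => p.1 * p.2 := measurable_fst.mul measurable_snd
  haveI hν : IsProbabilityMeasure
      (((betaDist (m + l) b).prod (betaDist l m)).map (fun p : ℝ × ℝ => p.1 * p.2)) :=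
    Measure.isProbabilityMeasure_map hmul.aemeasurable
  have hψ : Measurable fun r : ℝ × ℝ => (r.2 + (1 - r.2) * r.1, r.1) :=
    (measurable_snd.add ((measurable_const.sub measurable_snd).mul measurable_fst)).prodMk
      measurable_fst
  have hf1 : Measurable fun x : ℝ => ENNReal.ofReal (bpdf (m + l) b x) :=
    ENNReal.measurable_ofReal.comp (bpdf_meas _ _)
  have hf2 : Measurable fun w : ℝ => ENNReal.ofReal (bpdf l m w) :=
    ENNReal.measurable_ofReal.comp (bpdf_meas _ _)
  have hf3 : Measurable fun y : ℝ => ENNReal.ofReal (bpdf m b y) :=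
    ENNReal.measurable_ofReal.comp (bpdf_meas _ _)
  have hgm : Measurable fun p : ℝ × ℝ => ENNReal.ofReal (g l m b p) :=
    ENNReal.measurable_ofReal.comp (g_meas l m b)
  ext S hS
  have hIm : Measurable (S.indicator (fun _ => (1:ℝ≥0∞))) := measurable_const.indicator hS
  have hJm : Measurable fun u : ℝ => ∫⁻ y, ENNReal.ofReal (bpdf m b y) *
      S.indicator (fun _ => (1:ℝ≥0∞)) (y + (1 - y) * u, u) :=
    Measurable.lintegral_prod_right'
      ((hf3.comp measurable_snd).mul (hIm.comp hψ))
  have hFm : ∀ u : ℝ, Measurable fun x : ℝ => ENNReal.ofReal (g l m b (x, u)) := fun u =>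
    ENNReal.measurable_ofReal.comp ((g_meas l m b).comp (measurable_id.prodMk measurable_const))
  calc ((((betaDist (m + l) b).prod (betaDist l m)).map (fun p : ℝ × ℝ => p.1 * p.2)).prod
        (betaDist m b)).map (fun r : ℝ × ℝ => (r.2 + (1 - r.2) * r.1, r.1)) S
      = ((((betaDist (m + l) b).prod (betaDist l m)).map (fun p : ℝ × ℝ => p.1 * p.2)).prod
          (betaDist m b)) ((fun r : ℝ × ℝ => (r.2 + (1 - r.2) * r.1, r.1)) ⁻¹' S) :=
        Measure.map_apply hψ hS
    _ = ∫⁻ r, ((fun r : ℝ × ℝ => (r.2 + (1 - r.2) * r.1, r.1)) ⁻¹' S).indicator (fun _ => 1) r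
          ∂((((betaDist (m + l) b).prod (betaDist l m)).map (fun p : ℝ × ℝ => p.1 * p.2)).prod
            (betaDist m b)) := (lintegral_indicator_one (hψ hS)).symm
    _ = ∫⁻ r : ℝ × ℝ, S.indicator (fun _ => 1) (r.2 + (1 - r.2) * r.1, r.1)
          ∂((((betaDist (m + l) b).prod (betaDist l m)).map (fun p : ℝ × ℝ => p.1 * p.2)).prod
            (betaDist m b)) :=
        lintegral_congr fun r => indicator_comp (fun r : ℝ × ℝ => (r.2 + (1 - r.2) * r.1, r.1)) S r
    _ = ∫⁻ u, ∫⁻ y, S.indicator (fun _ => 1) (y + (1 - y) * u, u) ∂(betaDist m b)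
          ∂(((betaDist (m + l) b).prod (betaDist l m)).map (fun p : ℝ × ℝ => p.1 * p.2)) :=
        lintegral_prod _ (hIm.comp hψ).aemeasurable
    _ = ∫⁻ u, (∫⁻ y, ENNReal.ofReal (bpdf m b y) *
            S.indicator (fun _ => 1) (y + (1 - y) * u, u))
          ∂(((betaDist (m + l) b).prod (betaDist l m)).map (fun p : ℝ × ℝ => p.1 * p.2)) := by
        refine lintegral_congr fun u => ?_
        rw [betaDist_eq m b]
        exact lintegral_withDensity_eq_lintegral_mul volume hf3
          (hIm.comp ((measurable_id.add ((measurable_const.sub measurable_id).mul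
            measurable_const)).prodMk measurable_const))
    _ = ∫⁻ p : ℝ × ℝ, (∫⁻ y, ENNReal.ofReal (bpdf m b y) *
            S.indicator (fun _ => 1) (y + (1 - y) * (p.1 * p.2), p.1 * p.2))
          ∂((betaDist (m + l) b).prod (betaDist l m)) := lintegral_map hJm hmul
    _ = ∫⁻ x, ∫⁻ w, (∫⁻ y, ENNReal.ofReal (bpdf m b y) *
            S.indicator (fun _ => 1) (y + (1 - y) * (x * w), x * w))
          ∂(betaDist l m) ∂(betaDist (m + l) b) :=
        lintegral_prod _ ((hJm.comp hmul).aemeasurable)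
    _ = ∫⁻ x, (∫⁻ w, ENNReal.ofReal (bpdf l m w) * ∫⁻ y, ENNReal.ofReal (bpdf m b y) *
            S.indicator (fun _ => 1) (y + (1 - y) * (x * w), x * w))
          ∂(betaDist (m + l) b) := by
        refine lintegral_congr fun x => ?_
        rw [betaDist_eq l m]
        exact lintegral_withDensity_eq_lintegral_mul volume hf2
          (hJm.comp (measurable_const.mul measurable_id))
    _ = ∫⁻ x, ENNReal.ofReal (bpdf (m + l) b x) *
          ∫⁻ w, ENNReal.ofReal (bpdf l m w) * ∫⁻ y, ENNReal.ofReal (bpdf m b y) *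
            S.indicator (fun _ => 1) (y + (1 - y) * (x * w), x * w) := by
        rw [betaDist_eq (m + l) b]
        exact lintegral_withDensity_eq_lintegral_mul volume hf1
          (Measurable.lintegral_prod_right'
            ((hf2.comp measurable_snd).mul (hJm.comp hmul)))
    _ = ∫⁻ x, ∫⁻ u, ENNReal.ofReal (g l m b (x, u)) * ∫⁻ y, ENNReal.ofReal (bpdf m b y) *
            S.indicator (fun _ => 1) (y + (1 - y) * u, u) :=
        lintegral_congr fun x => key_x hl hm hb x _ hJm
    _ = ∫⁻ u, ∫⁻ x, ENNReal.ofReal (g l m b (x, u)) * ∫⁻ y, ENNReal.ofReal (bpdf m b y) *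
            S.indicator (fun _ => 1) (y + (1 - y) * u, u) :=
        lintegral_lintegral_swap ((hgm.mul (hJm.comp measurable_snd)).aemeasurable)
    _ = ∫⁻ u, (∫⁻ x, ENNReal.ofReal (g l m b (x, u))) * ∫⁻ y, ENNReal.ofReal (bpdf m b y) *
            S.indicator (fun _ => 1) (y + (1 - y) * u, u) :=
        lintegral_congr fun u => lintegral_mul_const _ (hFm u)
    _ = ∫⁻ u, ∫⁻ s, ENNReal.ofReal (g l m b (s, u)) * S.indicator (fun _ => 1) (s, u) :=
        lintegral_congr fun u => key_u hl hm hb u _ hIm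
    _ = ∫⁻ p : ℝ × ℝ, ENNReal.ofReal (g l m b p) * S.indicator (fun _ => 1) p
          ∂(volume.prod volume) :=
        (lintegral_prod_symm _ ((hgm.mul hIm).aemeasurable)).symm
    _ = ∫⁻ p : ℝ × ℝ, S.indicator (fun p => ENNReal.ofReal (g l m b p)) p
          ∂(volume.prod volume) := by
        refine lintegral_congr fun p => ?_
        by_cases h : p ∈ S
        · rw [Set.indicator_of_mem h, Set.indicator_of_mem h, mul_one]
        · rw [Set.indicator_of_notMem h, Set.indicator_of_notMem h, mul_zero]
    _ = ∫⁻ p in S, ENNReal.ofReal (g l m b p) ∂(volume.prod volume) :=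
        lintegral_indicator hS _
    _ = D l m b S := (withDensity_apply _ hS).symm


lemma beta_compl (a c : ℝ) : betaDist a c ((Set.Ioo (0:ℝ) 1)ᶜ) = 0 := by
  rw [betaDist_eq, withDensity_apply _ measurableSet_Ioo.compl]
  calc ∫⁻ x in (Ioo (0:ℝ) 1)ᶜ, ENNReal.ofReal (bpdf a c x)
      = ∫⁻ _ in (Ioo (0:ℝ) 1)ᶜ, (0:ℝ≥0∞) := by
        refine setLIntegral_congr_fun measurableSet_Ioo.compl
          (fun x hx => ?_)
        rw [show bpdf a c x = 0 from by
          unfold bpdf; rw [if_neg (by simpa [Set.mem_Ioo] using hx)], ENNReal.ofReal_zero]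
    _ = 0 := by simp

end Stmt12

/-- invariance of the beta model. If `R¹, R², Y` are independent with
`R¹ ~ Be(μ+λ,β)`, `R² ~ Be⁻¹(λ,μ)`, `Y ~ Be(μ,β)` (`λ,μ,β > 0`), then
`(Y + (1-Y)·R¹/R², Y·R²/R¹ + (1-Y)) =ᵈ (R¹, R²)`. -/
theorem stmt_12 {Ω : Type*} [MeasurableSpace Ω] (μ : Measure Ω) [IsProbabilityMeasure μ]
    (R1 R2 Y : Ω → ℝ) (hR1 : Measurable R1) (hR2 : Measurable R2) (hY : Measurable Y)
    (hind : iIndepFun ![R1, R2, Y] μ)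
    (l m b : ℝ) (hl : 0 < l) (hm : 0 < m) (hb : 0 < b)
    (hR1d : μ.map R1 = betaDist (m + l) b)
    (hR2d : μ.map (fun ω => (R2 ω)⁻¹) = betaDist l m)
    (hYd : μ.map Y = betaDist m b) :
    μ.map (fun ω => (Y ω + (1 - Y ω) * R1 ω / R2 ω, Y ω * R2 ω / R1 ω + (1 - Y ω)))
      = μ.map (fun ω => (R1 ω, R2 ω)) := by
  have hml : (0:ℝ) < m + l := by linarith
  have hmeas3 : ∀ i, Measurable (![R1, R2, Y] i) := fun i => by fin_cases i <;> assumption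
  have hWm : Measurable fun ω => (R2 ω)⁻¹ := hR2.inv
  have hψ : Measurable fun r : ℝ × ℝ => (r.2 + (1 - r.2) * r.1, r.1) :=
    (measurable_snd.add ((measurable_const.sub measurable_snd).mul measurable_fst)).prodMk
      measurable_fst
  have hφ : Measurable fun p : ℝ × ℝ => (p.1, p.1 / p.2) :=
    measurable_fst.prodMk (measurable_fst.div measurable_snd)
  have hi12 : IndepFun R1 (fun ω => (R2 ω)⁻¹) μ := by
    have h := hind.indepFun (show (0:Fin 3) ≠ 1 by decide)
    exact h.comp measurable_id measurable_inv
  have hmap12 : μ.map (fun ω => (R1 ω, (R2 ω)⁻¹))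
      = (betaDist (m + l) b).prod (betaDist l m) := by
    rw [(indepFun_iff_map_prod_eq_prod_map_map hR1.aemeasurable hWm.aemeasurable).mp hi12,
      hR1d, hR2d]
  have hiUY : IndepFun (fun ω => R1 ω * (R2 ω)⁻¹) Y μ := by
    have h := hind.indepFun_prodMk hmeas3 0 1 2 (by decide) (by decide)
    exact h.comp (measurable_fst.mul measurable_snd.inv) measurable_id
  have hmapU : μ.map (fun ω => R1 ω * (R2 ω)⁻¹)
      = ((betaDist (m + l) b).prod (betaDist l m)).map (fun p : ℝ × ℝ => p.1 * p.2) := by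
    rw [← hmap12, Measure.map_map (show Measurable fun p : ℝ × ℝ => p.1 * p.2 from measurable_fst.mul measurable_snd) (hR1.prodMk hWm)]
    rfl
  have hmapUY : μ.map (fun ω => (R1 ω * (R2 ω)⁻¹, Y ω))
      = (((betaDist (m + l) b).prod (betaDist l m)).map
          (fun p : ℝ × ℝ => p.1 * p.2)).prod (betaDist m b) := by
    rw [(indepFun_iff_map_prod_eq_prod_map_map (show Measurable fun ω => R1 ω * (R2 ω)⁻¹ from hR1.mul hWm).aemeasurable
      hY.aemeasurable).mp hiUY, hYd, hmapU]
  have hG : μ.map (fun ω => (R1 ω, R1 ω * (R2 ω)⁻¹)) = Stmt12.D l m b := by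
    rw [show (fun ω => (R1 ω, R1 ω * (R2 ω)⁻¹))
        = (fun p : ℝ × ℝ => (p.1, p.1 * p.2)) ∘ (fun ω => (R1 ω, (R2 ω)⁻¹)) from rfl,
      ← Measure.map_map (show Measurable fun p : ℝ × ℝ => (p.1, p.1 * p.2) from measurable_fst.prodMk (measurable_fst.mul measurable_snd))
        (hR1.prodMk hWm), hmap12, Stmt12.M1 hl hm hb]
  have hH : μ.map (fun ω => (Y ω + (1 - Y ω) * (R1 ω * (R2 ω)⁻¹), R1 ω * (R2 ω)⁻¹))
      = Stmt12.D l m b := by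
    rw [show (fun ω => (Y ω + (1 - Y ω) * (R1 ω * (R2 ω)⁻¹), R1 ω * (R2 ω)⁻¹))
        = (fun r : ℝ × ℝ => (r.2 + (1 - r.2) * r.1, r.1))
          ∘ (fun ω => (R1 ω * (R2 ω)⁻¹, Y ω)) from rfl,
      ← Measure.map_map hψ (show Measurable fun ω => (R1 ω * (R2 ω)⁻¹, Y ω) from (hR1.mul hWm).prodMk hY), hmapUY, Stmt12.M2 hl hm hb]
  have haeR1 : ∀ᵐ ω ∂μ, R1 ω ∈ Set.Ioo (0:ℝ) 1 := by
    have h0 : μ (R1 ⁻¹' (Set.Ioo (0:ℝ) 1)ᶜ) = 0 := by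
      rw [← Measure.map_apply hR1 measurableSet_Ioo.compl, hR1d, Stmt12.beta_compl]
    exact ae_iff.mpr h0
  have haeW : ∀ᵐ ω ∂μ, (R2 ω)⁻¹ ∈ Set.Ioo (0:ℝ) 1 := by
    have h0 : μ ((fun ω => (R2 ω)⁻¹) ⁻¹' (Set.Ioo (0:ℝ) 1)ᶜ) = 0 := by
      rw [← Measure.map_apply hWm measurableSet_Ioo.compl, hR2d, Stmt12.beta_compl]
    exact ae_iff.mpr h0
  have e1 : μ.map (fun ω => (Y ω + (1 - Y ω) * R1 ω / R2 ω, Y ω * R2 ω / R1 ω + (1 - Y ω)))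
      = (Stmt12.D l m b).map (fun p : ℝ × ℝ => (p.1, p.1 / p.2)) := by
    rw [← hH, Measure.map_map hφ (show Measurable fun ω => (Y ω + (1 - Y ω) * (R1 ω * (R2 ω)⁻¹), R1 ω * (R2 ω)⁻¹) from ((hY.add ((measurable_const.sub hY).mul
      (hR1.mul hWm)))).prodMk (hR1.mul hWm))]
    apply Measure.map_congr
    filter_upwards [haeR1, haeW] with ω h1 h2
    have hx : R1 ω ≠ 0 := ne_of_gt h1.1
    have hw : (R2 ω)⁻¹ ≠ 0 := ne_of_gt h2.1
    have hR2ne : R2 ω ≠ 0 := by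
      intro h; rw [h] at hw; simp at hw
    show (Y ω + (1 - Y ω) * R1 ω / R2 ω, Y ω * R2 ω / R1 ω + (1 - Y ω))
      = (Y ω + (1 - Y ω) * (R1 ω * (R2 ω)⁻¹),
         (Y ω + (1 - Y ω) * (R1 ω * (R2 ω)⁻¹)) / (R1 ω * (R2 ω)⁻¹))
    refine Prod.ext ?_ ?_
    · show Y ω + (1 - Y ω) * R1 ω / R2 ω = Y ω + (1 - Y ω) * (R1 ω * (R2 ω)⁻¹)
      rw [div_eq_mul_inv, mul_assoc]
    · show Y ω * R2 ω / R1 ω + (1 - Y ω)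
        = (Y ω + (1 - Y ω) * (R1 ω * (R2 ω)⁻¹)) / (R1 ω * (R2 ω)⁻¹)
      field_simp
  have e2 : μ.map (fun ω => (R1 ω, R2 ω))
      = (Stmt12.D l m b).map (fun p : ℝ × ℝ => (p.1, p.1 / p.2)) := by
    rw [← hG, Measure.map_map hφ (show Measurable fun ω => (R1 ω, R1 ω * (R2 ω)⁻¹) from hR1.prodMk (hR1.mul hWm))]
    apply Measure.map_congr
    filter_upwards [haeR1, haeW] with ω h1 h2
    have hx : R1 ω ≠ 0 := ne_of_gt h1.1
    have hw : (R2 ω)⁻¹ ≠ 0 := ne_of_gt h2.1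
    have hR2ne : R2 ω ≠ 0 := by
      intro h; rw [h] at hw; simp at hw
    show (R1 ω, R2 ω) = (R1 ω, R1 ω / (R1 ω * (R2 ω)⁻¹))
    refine Prod.ext rfl ?_
    show R2 ω = R1 ω / (R1 ω * (R2 ω)⁻¹)
    field_simp
  rw [e1, e2]
end

section
/- For positive reals r1, r2, y with r2 + r1 ≠ 0, conjugating T^{(1,1)} by the reflection ρ(r1,r2,y) := (r2, r1, 1+y) gives ρ ∘ T^{(1,1)} ∘ ρ⁻¹ = T^{(-1,1)}, i.e. ρ(T^{(1,1)}(ρ⁻¹(r1,r2,y))) = T^{(-1,1)}(r1,r2,y). -/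
/-- conjugating `T^{(1,1)}` by the reflection
`ρ(r1,r2,y) = (r2, r1, 1+y)` (with `ρ⁻¹(r1,r2,y) = (r2, r1, y-1)`) gives
`T^{(-1,1)}`: `ρ(T^{(1,1)}(ρ⁻¹(r1,r2,y))) = T^{(-1,1)}(r1,r2,y)`. -/
theorem stmt_17 (r1 r2 y : ℝ) (hr1 : 0 < r1) (hr2 : 0 < r2) (hy : 0 < y)
    (hden : r2 + r1 ≠ 0) :
    ((Tab 1 1 (r2, r1, y - 1)).2.1, (Tab 1 1 (r2, r1, y - 1)).1,
        1 + (Tab 1 1 (r2, r1, y - 1)).2.2)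
      = Tab (-1) 1 (r1, r2, y) := by
  simp only [Tab, Prod.mk.injEq]
  refine ⟨?_, ?_, ?_⟩ <;> field_simp <;> ring
end

section
/- Let O ⊂ (0,∞)² and O3 ⊂ (0,∞) be open with O3 connected, and let h : O3 → (0,∞) be continuously differentiable. Suppose (T1,T2)(O × O3) = O where T1(r1,r2,y) = y + h(y)·r1/r2 and T2(r1,r2,y) = y·r2/r1 + h(y), and suppose L(s,y) := s + h'(y) does not vanish on Q(O) × O3. Then G(s,y) := (y + h(y)/s, y·s + h(y)) is a C¹-diffeomorphism from Q(O) × O3 onto O, with Jacobian determinant det DG(s,y) = -(L(s,y)/s)·(y + h(y)/s). -/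
open Set ContinuousLinearMap


/-- if `O` is open, `O3` is open and connected, `h` is `C¹` and
positive on `O3`, `(T1,T2)` maps `O × O3` onto `O`, and `L(s,y) = s + h'(y)` does
not vanish on `Q(O) × O3`, then `G(s,y) = (y + h(y)/s, y·s + h(y))` is a
`C¹`-diffeomorphism from `Q(O) × O3` onto `O` with Jacobian determinant
`det DG(s,y) = -(L(s,y)/s)·(y + h(y)/s)`. -/
theorem stmt_18
    (O : Set (ℝ × ℝ)) (hOopen : IsOpen O) (hO : O ⊆ Set.Ioi (0 : ℝ) ×ˢ Set.Ioi (0 : ℝ))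
    (O3 : Set ℝ) (hO3open : IsOpen O3) (hO3conn : IsConnected O3)
    (hO3 : O3 ⊆ Set.Ioi (0 : ℝ))
    (h : ℝ → ℝ) (hhC1 : ContDiffOn ℝ 1 h O3) (hh : ∀ y ∈ O3, 0 < h y)
    (hsurj : (fun p : ℝ × ℝ × ℝ => (p.2.2 + h p.2.2 * p.1 / p.2.1,
        p.2.2 * p.2.1 / p.1 + h p.2.2)) ''
        {p : ℝ × ℝ × ℝ | (p.1, p.2.1) ∈ O ∧ p.2.2 ∈ O3} = O)
    (hL : ∀ s ∈ {s : ℝ | ∃ p ∈ O, s = p.2 / p.1}, ∀ y ∈ O3, s + deriv h y ≠ 0) :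
    Set.InjOn (fun q : ℝ × ℝ => (q.2 + h q.2 / q.1, q.2 * q.1 + h q.2))
      ({s : ℝ | ∃ p ∈ O, s = p.2 / p.1} ×ˢ O3) ∧
    (fun q : ℝ × ℝ => (q.2 + h q.2 / q.1, q.2 * q.1 + h q.2)) ''
      ({s : ℝ | ∃ p ∈ O, s = p.2 / p.1} ×ˢ O3) = O ∧
    ContDiffOn ℝ 1 (fun q : ℝ × ℝ => (q.2 + h q.2 / q.1, q.2 * q.1 + h q.2))
      ({s : ℝ | ∃ p ∈ O, s = p.2 / p.1} ×ˢ O3) ∧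
    ∀ q ∈ ({s : ℝ | ∃ p ∈ O, s = p.2 / p.1} ×ˢ O3),
      ∃ f : ℝ × ℝ →L[ℝ] ℝ × ℝ,
        HasFDerivAt (fun q : ℝ × ℝ => (q.2 + h q.2 / q.1, q.2 * q.1 + h q.2)) f q ∧
        LinearMap.det (f : ℝ × ℝ →ₗ[ℝ] ℝ × ℝ) ≠ 0 ∧
        LinearMap.det (f : ℝ × ℝ →ₗ[ℝ] ℝ × ℝ)
          = -((q.1 + deriv h q.2) / q.1) * (q.2 + h q.2 / q.1) := by
  set Q : Set ℝ := {s : ℝ | ∃ p ∈ O, s = p.2 / p.1} with hQdef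
  have hQpos : ∀ s ∈ Q, 0 < s := by
    rintro s ⟨p, hp, rfl⟩
    have h1 := (hO hp).1
    have h2 := (hO hp).2
    simp only [Set.mem_Ioi] at h1 h2
    positivity
  -- derivative of h at points of O3
  have hderiv : ∀ y ∈ O3, HasDerivAt h (deriv h y) y := by
    intro y hy
    exact (((hhC1.differentiableOn one_ne_zero) y hy).differentiableAt
      (hO3open.mem_nhds hy)).hasDerivAt
  -- convexity of O3
  have hconv : Convex ℝ O3 := convex_iff_ordConnected.mpr
    hO3conn.isPreconnected.ordConnected
  have hderivCont : ContinuousOn (deriv h) O3 :=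
    hhC1.continuousOn_deriv_of_isOpen hO3open le_rfl
  -- Injectivity
  have hinj : Set.InjOn (fun q : ℝ × ℝ => (q.2 + h q.2 / q.1, q.2 * q.1 + h q.2))
      (Q ×ˢ O3) := by
    rintro ⟨s, y⟩ ⟨hsQ, hyO⟩ ⟨s', y'⟩ ⟨hsQ', hyO'⟩ heq
    simp only [Prod.mk.injEq] at heq
    obtain ⟨h1, h2⟩ := heq
    have hs : (0:ℝ) < s := hQpos _ hsQ
    have hs' : (0:ℝ) < s' := hQpos _ hsQ'
    have hy : (0:ℝ) < y := hO3 hyO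
    have hy' : (0:ℝ) < y' := hO3 hyO'
    have hu : 0 < y + h y / s := by have := hh y hyO; positivity
    have hss : s = s' := by
      have hv : y * s + h y = s * (y + h y / s) := by field_simp
      have hv' : y' * s' + h y' = s' * (y' + h y' / s') := by field_simp
      have : s * (y + h y / s) = s' * (y + h y / s) := by
        rw [← hv, h2, hv', ← h1]
      exact mul_right_cancel₀ (ne_of_gt hu) this
    subst hss
    -- now y * s + h y = y' * s + h y'
    have hmono : Set.InjOn (fun z => z * s + h z) O3 := by
      have hderiv' : ∀ z ∈ O3, HasDerivAt (fun z => z * s + h z)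
          (s + deriv h z) z := by
        intro z hz
        have := ((hasDerivAt_id z).mul_const s).add (hderiv z hz)
        exact this.congr_deriv (by ring)
      have hcont : ContinuousOn (fun z => z * s + h z) O3 := fun z hz =>
        ((hderiv' z hz).continuousAt).continuousWithinAt
      have hne : ∀ z ∈ O3, s + deriv h z ≠ 0 := fun z hz => hL s hsQ z hz
      -- constant sign of s + deriv h on the connected set O3
      have hcontd : ContinuousOn (fun z => s + deriv h z) O3 :=
        continuousOn_const.add hderivCont
      have key : ∀ z1 ∈ O3, ∀ z2 ∈ O3, s + deriv h z1 < 0 → 0 < s + deriv h z2 → False := by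
        intro z1 hz1 z2 hz2 hn hp
        have himg := (hO3conn.isPreconnected.image _ hcontd).ordConnected
        have h0 : (0:ℝ) ∈ (fun z => s + deriv h z) '' O3 :=
          himg.out (Set.mem_image_of_mem _ hz1) (Set.mem_image_of_mem _ hz2) ⟨hn.le, hp.le⟩
        obtain ⟨z0, hz0, hz0e⟩ := h0
        exact hne z0 hz0 hz0e
      obtain ⟨z0, hz0⟩ := hO3conn.nonempty
      have hsign : (∀ z ∈ O3, 0 < s + deriv h z) ∨ (∀ z ∈ O3, s + deriv h z < 0) := by
        rcases lt_or_gt_of_ne (hne z0 hz0) with hn | hp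
        · right; intro z hz
          rcases lt_or_gt_of_ne (hne z hz) with h' | h'
          · exact h'
          · exact absurd (key z0 hz0 z hz hn h') (by simp)
        · left; intro z hz
          rcases lt_or_gt_of_ne (hne z hz) with h' | h'
          · exact absurd (key z hz z0 hz0 h' hp) (by simp)
          · exact h'
      rcases hsign with hpos | hneg
      · exact (strictMonoOn_of_deriv_pos hconv hcont (fun z hz => by
          rw [hO3open.interior_eq] at hz
          rw [(hderiv' z hz).deriv]; exact hpos z hz)).injOn
      · exact (strictAntiOn_of_deriv_neg hconv hcont (fun z hz => by
          rw [hO3open.interior_eq] at hz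
          rw [(hderiv' z hz).deriv]; exact hneg z hz)).injOn
    have hyy : y * s + h y = y' * s + h y' := h2
    have := hmono hyO hyO' hyy
    exact Prod.ext rfl this
  -- Image
  have himage : (fun q : ℝ × ℝ => (q.2 + h q.2 / q.1, q.2 * q.1 + h q.2)) ''
      (Q ×ˢ O3) = O := by
    apply Set.Subset.antisymm
    · rintro _ ⟨⟨s, y⟩, ⟨hsQ, hyO⟩, rfl⟩
      obtain ⟨p, hp, rfl⟩ := hsQ
      have h1 := (hO hp).1
      have h2 := (hO hp).2
      simp only [Set.mem_Ioi] at h1 h2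
      rw [← hsurj]
      refine ⟨(p.1, p.2, y), ⟨by simpa using hp, hyO⟩, ?_⟩
      simp only [Prod.mk.injEq]
      constructor
      · field_simp
      · field_simp
    · intro q hq
      rw [← hsurj] at hq
      obtain ⟨p, ⟨hpO, hpO3⟩, rfl⟩ := hq
      have h1 := (hO hpO).1
      have h2 := (hO hpO).2
      simp only [Set.mem_Ioi] at h1 h2
      refine ⟨(p.2.1 / p.1, p.2.2), ⟨⟨(p.1, p.2.1), hpO, rfl⟩, hpO3⟩, ?_⟩
      simp only [Prod.mk.injEq]
      constructor
      · field_simp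
      · field_simp
  -- C¹ smoothness
  have hcomp : ContDiffOn ℝ 1 (fun q : ℝ × ℝ => h q.2) (Q ×ˢ O3) :=
    hhC1.comp contDiff_snd.contDiffOn (fun q hq => hq.2)
  have hC1 : ContDiffOn ℝ 1 (fun q : ℝ × ℝ => (q.2 + h q.2 / q.1, q.2 * q.1 + h q.2))
      (Q ×ˢ O3) := by
    apply ContDiffOn.prodMk
    · exact contDiff_snd.contDiffOn.add (hcomp.div contDiff_fst.contDiffOn
        (fun q hq => ne_of_gt (hQpos _ hq.1)))
    · exact (contDiff_snd.mul contDiff_fst).contDiffOn.add hcomp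
  refine ⟨hinj, himage, hC1, ?_⟩
  rintro ⟨s, y⟩ ⟨hsQ, hyO⟩
  have hs : (0:ℝ) < s := hQpos _ hsQ
  have hy : (0:ℝ) < y := hO3 hyO
  have hhy : (0:ℝ) < h y := hh y hyO
  have hLs : s + deriv h y ≠ 0 := hL s hsQ y hyO
  set a : ℝ := -(h y / s ^ 2) with ha
  set b : ℝ := 1 + deriv h y / s with hb
  set c : ℝ := y with hc
  set d : ℝ := s + deriv h y with hd
  refine ⟨LinearMap.toContinuousLinearMap (Matrix.toLin (Module.Basis.finTwoProd ℝ)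
    (Module.Basis.finTwoProd ℝ) !![a, b; c, d]), ?_, ?_, ?_⟩
  · rw [Matrix.toLin_finTwoProd_toContinuousLinearMap]
    have hH : HasFDerivAt (fun q : ℝ × ℝ => h q.2)
        (deriv h y • ContinuousLinearMap.snd ℝ ℝ ℝ) (s, y) :=
      (hderiv y hyO).comp_hasFDerivAt (s, y) hasFDerivAt_snd
    have hinv : HasFDerivAt (fun q : ℝ × ℝ => (q.1)⁻¹)
        ((-((s:ℝ)^2)⁻¹) • ContinuousLinearMap.fst ℝ ℝ ℝ) (s, y) :=
      (hasDerivAt_inv (ne_of_gt hs)).comp_hasFDerivAt (s, y) hasFDerivAt_fst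
    have hd1 := hasFDerivAt_snd.add (hH.mul hinv)
    have hd2 := (hasFDerivAt_snd.mul hasFDerivAt_fst).add hH
    simp only [div_eq_mul_inv]
    have hs0 : s ≠ 0 := ne_of_gt hs
    refine (HasFDerivAt.prodMk hd1 hd2).congr_fderiv (ContinuousLinearMap.ext fun v => ?_)
    obtain ⟨u, w⟩ := v
    simp [ha, hb, hc, hd, smul_smul, Prod.ext_iff]
    constructor <;> (try field_simp) <;> ring
  · have hdet : LinearMap.det ((LinearMap.toContinuousLinearMap (Matrix.toLin
        (Module.Basis.finTwoProd ℝ) (Module.Basis.finTwoProd ℝ) !![a, b; c, d])) : ℝ × ℝ →ₗ[ℝ] ℝ × ℝ)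
        = -((s + deriv h y) / s) * (y + h y / s) := by
      rw [LinearMap.coe_toContinuousLinearMap, LinearMap.det_toLin, Matrix.det_fin_two_of,
        ha, hb, hc, hd]
      field_simp
      ring
    rw [hdet]
    have h1 : (s + deriv h y) / s ≠ 0 := div_ne_zero hLs (ne_of_gt hs)
    have h2 : 0 < y + h y / s := by positivity
    simp only [neg_mul, neg_ne_zero]
    exact mul_ne_zero h1 (ne_of_gt h2)
  · rw [LinearMap.coe_toContinuousLinearMap, LinearMap.det_toLin, Matrix.det_fin_two_of,
      ha, hb, hc, hd]
    field_simp
    ring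
end
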